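/- arXiv:2003.01980 — 9 statements merged into one kernel-verified Lean document; each statement's English description precedes it below -/
import Mathlib

section
/- Let α > 0 and 1 ≤ J ≤ N-1. The minimum of m^J(x) over all x ∈ ℝ^N satisfying x^i - x^{i-1} ≥ α for all i = 2,...,N equals αN/2. Moreover, m^J(x) = αN/2 if and only if x^i - x^{i-1} = α for all i = 2,...,N. -/
open Finset

private lemma tel (x : ℕ → ℝ) (a : ℕ) : ∀ b, a ≤ b →
    ∑ k ∈ Ioc a b, (x k - x (k - 1)) = x b - x a := by
  intro b hb
  induction b, hb using Nat.le_induction with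
  | base => simp
  | succ b hb ih =>
    rw [Finset.sum_Ioc_succ_top (by omega), ih]
    simp only [Nat.add_sub_cancel]
    ring

private lemma sumA (x : ℕ → ℝ) (a : ℕ) : ∀ b, a ≤ b →
    ∑ i ∈ Ioc a b, x i
      = ((b : ℝ) - a) * x a + ∑ k ∈ Ioc a b, (((b : ℝ) - k + 1) * (x k - x (k - 1))) := by
  intro b hb
  induction b, hb using Nat.le_induction with
  | base => simp
  | succ b hb ih =>
    have h2 : ∀ k ∈ Ioc a (b+1),
        ((((b+1:ℕ)) : ℝ) - k + 1) * (x k - x (k - 1))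
          = ((b : ℝ) - k + 1) * (x k - x (k - 1)) + (x k - x (k - 1)) := by
      intro k _; push_cast; ring
    rw [Finset.sum_Ioc_succ_top (by omega), ih,
      Finset.sum_congr rfl h2, Finset.sum_add_distrib,
      Finset.sum_Ioc_succ_top (f := fun k => ((b : ℝ) - k + 1) * (x k - x (k - 1))) (by omega),
      tel x a (b+1) (by omega)]
    simp only [Nat.add_sub_cancel]
    push_cast
    ring

private lemma sumB (x : ℕ → ℝ) : ∀ b, 1 ≤ b →
    ∑ i ∈ Ioc 0 b, x i
      = (b : ℝ) * x b - ∑ k ∈ Ioc 1 b, (((k : ℝ) - 1) * (x k - x (k - 1))) := by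
  intro b hb
  induction b, hb using Nat.le_induction with
  | base => simp
  | succ b hb ih =>
    rw [Finset.sum_Ioc_succ_top (by omega), ih,
      Finset.sum_Ioc_succ_top (f := fun k => ((k:ℝ)-1) * (x k - x (k-1))) (by omega)]
    simp only [Nat.add_sub_cancel]
    push_cast
    ring

private lemma gaussA (a : ℕ) : ∀ b, a ≤ b →
    ∑ k ∈ Ioc a b, ((b : ℝ) - k + 1) = ((b : ℝ) - a) * ((b : ℝ) - a + 1) / 2 := by
  intro b hb
  induction b, hb using Nat.le_induction with
  | base => simp
  | succ b hb ih =>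
    have h2 : ∀ k ∈ Ioc a b, ((((b+1:ℕ)) : ℝ) - k + 1) = ((b : ℝ) - k + 1) + 1 := by
      intro k _; push_cast; ring
    rw [Finset.sum_Ioc_succ_top (by omega), Finset.sum_congr rfl h2, Finset.sum_add_distrib, ih,
      Finset.sum_const, Nat.card_Ioc, nsmul_eq_mul]
    push_cast [Nat.cast_sub hb]
    ring

private lemma gaussB : ∀ b : ℕ, 1 ≤ b →
    ∑ k ∈ Ioc 1 b, ((k : ℝ) - 1) = ((b : ℝ) - 1) * b / 2 := by
  intro b hb
  induction b, hb using Nat.le_induction with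
  | base => simp
  | succ b hb ih =>
    rw [Finset.sum_Ioc_succ_top (by omega), ih]
    push_cast
    ring

private lemma keyId (N J : ℕ) (hJ1 : 1 ≤ J) (hJN : J < N) (α : ℝ) (x : ℕ → ℝ) :
    (1 / ((N : ℝ) - J)) * ∑ i ∈ Finset.Icc (J + 1) N, x i
      - (1 / (J : ℝ)) * ∑ i ∈ Finset.Icc 1 J, x i - α * N / 2
    = ∑ k ∈ Finset.Icc 2 N,
        (if k ≤ J then ((k:ℝ)-1)/(J:ℝ) else ((N:ℝ)-k+1)/((N:ℝ)-J)) * (x k - x (k - 1) - α) := by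
  have hJ0 : (J : ℝ) ≠ 0 := Nat.cast_ne_zero.mpr (by omega)
  have hNJ : (N : ℝ) - J ≠ 0 := by
    have : (J:ℝ) < N := by exact_mod_cast hJN
    linarith
  rw [show Finset.Icc (J+1) N = Finset.Ioc J N from Finset.Icc_add_one_left_eq_Ioc J N,
      show Finset.Icc 1 J = Finset.Ioc 0 J from Finset.Icc_add_one_left_eq_Ioc 0 J,
      show Finset.Icc 2 N = Finset.Ioc 1 N from Finset.Icc_add_one_left_eq_Ioc 1 N,
      ← Finset.sum_Ioc_consecutive _ hJ1 (le_of_lt hJN)]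
  have hL : ∀ k ∈ Finset.Ioc 1 J,
      (if k ≤ J then ((k:ℝ)-1)/(J:ℝ) else ((N:ℝ)-k+1)/((N:ℝ)-J)) * (x k - x (k - 1) - α)
        = (1/(J:ℝ)) * (((k:ℝ)-1) * (x k - x (k-1))) - (α/(J:ℝ)) * ((k:ℝ)-1) := by
    intro k hk
    rw [if_pos (Finset.mem_Ioc.mp hk).2]
    ring
  have hR : ∀ k ∈ Finset.Ioc J N,
      (if k ≤ J then ((k:ℝ)-1)/(J:ℝ) else ((N:ℝ)-k+1)/((N:ℝ)-J)) * (x k - x (k - 1) - α)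
        = (1/((N:ℝ)-J)) * (((N:ℝ)-k+1) * (x k - x (k-1))) - (α/((N:ℝ)-J)) * ((N:ℝ)-k+1) := by
    intro k hk
    rw [if_neg (by simp only [Finset.mem_Ioc] at hk; omega)]
    ring
  rw [Finset.sum_congr rfl hL, Finset.sum_congr rfl hR,
      Finset.sum_sub_distrib, Finset.sum_sub_distrib,
      ← Finset.mul_sum, ← Finset.mul_sum, ← Finset.mul_sum, ← Finset.mul_sum,
      gaussB J hJ1, gaussA J N (le_of_lt hJN),
      sumA x J N (le_of_lt hJN), sumB x J hJ1]
  field_simp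
  ring

theorem stmt_3 (N : ℕ) (hN : 2 ≤ N) (α : ℝ) (hα : 0 < α)
    (J : ℕ) (hJ1 : 1 ≤ J) (hJ : J ≤ N - 1) :
    IsLeast { y : ℝ | ∃ x : ℕ → ℝ,
        (∀ i ∈ Finset.Icc 2 N, α ≤ x i - x (i - 1)) ∧
        y = (1 / ((N : ℝ) - J)) * ∑ i ∈ Finset.Icc (J + 1) N, x i
            - (1 / (J : ℝ)) * ∑ i ∈ Finset.Icc 1 J, x i }
      (α * N / 2)
    ∧ ∀ x : ℕ → ℝ, (∀ i ∈ Finset.Icc 2 N, α ≤ x i - x (i - 1)) →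
        ((1 / ((N : ℝ) - J)) * ∑ i ∈ Finset.Icc (J + 1) N, x i
            - (1 / (J : ℝ)) * ∑ i ∈ Finset.Icc 1 J, x i = α * N / 2
          ↔ ∀ i ∈ Finset.Icc 2 N, x i - x (i - 1) = α) := by
  have hJN : J < N := by omega
  have hJ0 : (0:ℝ) < (J:ℝ) := by exact_mod_cast hJ1
  have hNJ : (0:ℝ) < (N:ℝ) - J := by
    have : (J:ℝ) < N := by exact_mod_cast hJN
    linarith
  have hC : ∀ k ∈ Finset.Icc 2 N,
      0 < (if k ≤ J then ((k:ℝ)-1)/(J:ℝ) else ((N:ℝ)-k+1)/((N:ℝ)-J)) := by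
    intro k hk
    simp only [Finset.mem_Icc] at hk
    by_cases h : k ≤ J
    · rw [if_pos h]
      apply div_pos _ hJ0
      have : (2:ℝ) ≤ (k:ℝ) := by exact_mod_cast hk.1
      linarith
    · rw [if_neg h]
      apply div_pos _ hNJ
      have : (k:ℝ) ≤ (N:ℝ) := by exact_mod_cast hk.2
      linarith
  refine ⟨⟨⟨fun i => α * i, ?_, ?_⟩, ?_⟩, ?_⟩
  · intro i hi
    simp only [Finset.mem_Icc] at hi
    have h1 : ((i - 1 : ℕ) : ℝ) = (i:ℝ) - 1 := by
      rw [Nat.cast_sub (by omega)]; norm_num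
    simp only [h1]
    ring_nf
    linarith
  · have hid := keyId N J hJ1 hJN α (fun i => α * i)
    have hz : ∑ k ∈ Finset.Icc 2 N,
        (if k ≤ J then ((k:ℝ)-1)/(J:ℝ) else ((N:ℝ)-k+1)/((N:ℝ)-J))
          * (α * (k:ℝ) - α * ((k - 1 : ℕ):ℝ) - α) = 0 := by
      apply Finset.sum_eq_zero
      intro k hk
      simp only [Finset.mem_Icc] at hk
      have h1 : ((k - 1 : ℕ) : ℝ) = (k:ℝ) - 1 := by
        rw [Nat.cast_sub (by omega)]; norm_num
      simp only [h1]
      ring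
    rw [hz] at hid
    beta_reduce
    linarith
  · rintro y ⟨x, hx, rfl⟩
    have hid := keyId N J hJ1 hJN α x
    have hnn : 0 ≤ ∑ k ∈ Finset.Icc 2 N,
        (if k ≤ J then ((k:ℝ)-1)/(J:ℝ) else ((N:ℝ)-k+1)/((N:ℝ)-J)) * (x k - x (k - 1) - α) := by
      apply Finset.sum_nonneg
      intro k hk
      exact mul_nonneg (hC k hk).le (by have := hx k hk; linarith)
    linarith
  · intro x hx
    have hid := keyId N J hJ1 hJN α x
    constructor
    · intro heq
      rw [heq, sub_self] at hid
      have hall := (Finset.sum_eq_zero_iff_of_nonneg (fun k hk =>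
        mul_nonneg (hC k hk).le (by have := hx k hk; linarith))).mp hid.symm
      intro i hi
      rcases mul_eq_zero.mp (hall i hi) with h | h
      · exact absurd h (hC i hi).ne'
      · linarith
    · intro hall
      have hz : ∑ k ∈ Finset.Icc 2 N,
          (if k ≤ J then ((k:ℝ)-1)/(J:ℝ) else ((N:ℝ)-k+1)/((N:ℝ)-J)) * (x k - x (k - 1) - α)
            = 0 := by
        apply Finset.sum_eq_zero
        intro k hk
        rw [hall k hk]
        ring
      rw [hz] at hid
      linarith
end

section
/- Let x^1 < x^2 < ... < x^N be real numbers with |x^i - x^j| ≥ c/N for all i ≠ j (some c > 0 independent of N). If the empirical measures m^N = (1/N) Σ_i δ_{x^i} converge narrowly to a probability measure μ as N → ∞, then μ is absolutely continuous with respect to Lebesgue measure with density bounded by 2/c. -/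
open MeasureTheory Filter
open scoped ENNReal

section helpers
open Set Metric Topology

lemma emp_integral (N : ℕ) (x : Fin N → ℝ) (g : BoundedContinuousFunction ℝ ℝ) :
    ∫ y, g y ∂((N : ℝ≥0∞)⁻¹ • ∑ i : Fin N, Measure.dirac (x i))
      = (1 / (N : ℝ)) * ∑ i : Fin N, g (x i) := by
  rw [integral_smul_measure, integral_finset_sum_measure (fun i _ => g.integrable _)]
  simp [integral_dirac, ENNReal.toReal_inv, smul_eq_mul, one_div]

lemma emp_prob (N : ℕ) (hN : 0 < N) (x : Fin N → ℝ) :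
    IsProbabilityMeasure ((N : ℝ≥0∞)⁻¹ • ∑ i : Fin N, Measure.dirac (x i)) := by
  constructor
  rw [Measure.smul_apply, Measure.finset_sum_apply, smul_eq_mul]
  simp [ENNReal.inv_mul_cancel, hN.ne']

lemma count_lemma (c : ℝ) (hc : 0 < c) (N : ℕ) (hN : 0 < N) (x : Fin N → ℝ)
    (hdist : ∀ i j : Fin N, i ≠ j → c / N ≤ |x i - x j|) (a b : ℝ) :
    ((N : ℝ≥0∞)⁻¹ • ∑ i : Fin N, Measure.dirac (x i)) (Set.Ioo a b)
      ≤ ENNReal.ofReal ((b - a) / c + 1 / N) := by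
  classical
  have hN' : (0 : ℝ) < N := Nat.cast_pos.2 hN
  set S := Finset.univ.filter (fun i => x i ∈ Set.Ioo a b) with hS
  have happly : ((N : ℝ≥0∞)⁻¹ • ∑ i : Fin N, Measure.dirac (x i)) (Set.Ioo a b)
      = (N : ℝ≥0∞)⁻¹ * S.card := by
    rw [Measure.smul_apply, Measure.finset_sum_apply, smul_eq_mul]
    congr 1
    rw [← Finset.sum_boole]
    refine Finset.sum_congr rfl fun i _ => ?_
    rw [Measure.dirac_apply' _ measurableSet_Ioo, Set.indicator_apply]
    simp
  rw [happly]
  rcases S.eq_empty_or_nonempty with h | h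
  · simp [h]
  · obtain ⟨i0, hi0⟩ := h
    have hab : a < b := by
      have h2 := (Finset.mem_filter.1 hi0).2
      exact lt_trans h2.1 h2.2
    set r := c / (2 * N) with hr
    have hrpos : 0 < r := by positivity
    have h2r : c / N = 2 * r := by rw [hr]; field_simp
    have hsep : ∀ i j : Fin N, i ≠ j → x i + r ≤ x j - r ∨ x j + r ≤ x i - r := by
      intro i j hij
      have hd := hdist i j hij
      rw [h2r] at hd
      rcases abs_cases (x i - x j) with ⟨he, _⟩ | ⟨he, _⟩
      · right; linarith [he ▸ hd]
      · left; linarith [he ▸ hd]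
    have hdisj : (↑S : Set (Fin N)).PairwiseDisjoint
        (fun i => Set.Ioo (x i - r) (x i + r)) := by
      intro i _ j _ hij
      rcases hsep i j hij with h | h
      · exact Set.Ioo_disjoint_Ioo.2 (min_le_of_left_le (le_trans h (le_max_right _ _)))
      · exact Set.Ioo_disjoint_Ioo.2 (min_le_of_right_le (le_trans h (le_max_left _ _)))
    have hsub : (⋃ i ∈ S, Set.Ioo (x i - r) (x i + r)) ⊆ Set.Ioo (a - r) (b + r) := by
      intro y hy
      simp only [Set.mem_iUnion, Set.mem_Ioo] at hy ⊢
      obtain ⟨i, hiS, hy1, hy2⟩ := hy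
      have hxi := (Finset.mem_filter.1 hiS).2
      exact ⟨by linarith [hxi.1], by linarith [hxi.2]⟩
    have hvol : volume (⋃ i ∈ S, Set.Ioo (x i - r) (x i + r))
        = ENNReal.ofReal ((S.card : ℝ) * (2 * r)) := by
      rw [measure_biUnion_finset hdisj (fun i _ => measurableSet_Ioo)]
      have : ∀ i ∈ S, volume (Set.Ioo (x i - r) (x i + r)) = ENNReal.ofReal (2 * r) := by
        intro i _; rw [Real.volume_Ioo]; congr 1; ring
      rw [Finset.sum_congr rfl this, Finset.sum_const, nsmul_eq_mul,
        ← ENNReal.ofReal_natCast, ← ENNReal.ofReal_mul (Nat.cast_nonneg _)]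
    have hkey : (S.card : ℝ) * (2 * r) ≤ (b - a) + 2 * r := by
      have hmono := measure_mono (μ := volume) hsub
      rw [hvol, Real.volume_Ioo] at hmono
      have := (ENNReal.ofReal_le_ofReal_iff (by linarith)).1 hmono
      linarith
    rw [← ENNReal.ofReal_natCast N, ← ENNReal.ofReal_inv_of_pos hN',
      ← ENNReal.ofReal_natCast S.card, ← ENNReal.ofReal_mul (by positivity)]
    apply ENNReal.ofReal_le_ofReal
    rw [inv_mul_eq_div, div_le_iff₀ hN']
    rw [← h2r] at hkey
    have hc' : (0:ℝ) < c / N := by positivity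
    calc (S.card : ℝ) ≤ ((b - a) + c / N) / (c / N) := by
          exact (le_div_iff₀ hc').2 (by linarith)
      _ = ((b - a) / c + 1 / N) * N := by field_simp


end helpers

open Set Metric Topology in
theorem stmt_5 (c : ℝ) (hc : 0 < c)
    (x : (N : ℕ) → Fin N → ℝ)
    (hord : ∀ N, ∀ i j : Fin N, i < j → x N i < x N j)
    (hdist : ∀ N, ∀ i j : Fin N, i ≠ j → c / N ≤ |x N i - x N j|)
    (μ : Measure ℝ) [IsProbabilityMeasure μ]
    (hconv : ∀ g : BoundedContinuousFunction ℝ ℝ,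
      Tendsto (fun N : ℕ => (1 / (N : ℝ)) * ∑ i : Fin N, g (x N i)) atTop
        (nhds (∫ y, g y ∂μ))) :
    μ ≪ volume ∧ ∃ m : ℝ → ℝ≥0∞, μ = volume.withDensity m ∧
      ∀ᵐ y ∂volume, m y ≤ ENNReal.ofReal (2 / c) := by
  classical
  let P : ℕ → ProbabilityMeasure ℝ := fun n =>
    ⟨((n + 1 : ℕ) : ℝ≥0∞)⁻¹ • ∑ i : Fin (n + 1), Measure.dirac (x (n + 1) i),
      emp_prob (n + 1) n.succ_pos _⟩
  have hPt : Tendsto P atTop (𝓝 (⟨μ, inferInstance⟩ : ProbabilityMeasure ℝ)) := by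
    refine ProbabilityMeasure.tendsto_iff_forall_integral_tendsto.2 ?_
    intro f
    have h2 := (hconv f).comp (tendsto_add_atTop_nat 1)
    exact h2.congr fun n => (emp_integral (n + 1) (x (n + 1)) f).symm
  have key : ∀ a b : ℝ, μ (Set.Ioo a b) ≤ ENNReal.ofReal ((b - a) / c) := by
    intro a b
    have hlim : μ (Set.Ioo a b) ≤ atTop.liminf fun n => (P n : Measure ℝ) (Set.Ioo a b) :=
      ProbabilityMeasure.le_liminf_measure_open_of_tendsto hPt isOpen_Ioo
    have hbd : ∀ n : ℕ, (P n : Measure ℝ) (Set.Ioo a b)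
        ≤ ENNReal.ofReal ((b - a) / c + 1 / ((n + 1 : ℕ) : ℝ)) := fun n =>
      count_lemma c hc (n + 1) n.succ_pos (x (n + 1)) (fun i j hij => hdist (n + 1) i j hij) a b
    have htend : Tendsto (fun n : ℕ => ENNReal.ofReal ((b - a) / c + 1 / ((n + 1 : ℕ) : ℝ)))
        atTop (𝓝 (ENNReal.ofReal ((b - a) / c))) := by
      apply ENNReal.tendsto_ofReal
      have h0 := (tendsto_const_nhds (x := (b - a) / c) (f := atTop (α := ℕ))).add
        tendsto_one_div_add_atTop_nhds_zero_nat
      simpa using h0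
    exact hlim.trans ((liminf_le_liminf (Eventually.of_forall hbd)).trans
      (le_of_eq htend.liminf_eq))
  set κ := ENNReal.ofReal (2 / c) with hκ
  have hball : ∀ y r : ℝ, 0 < r →
      μ (Metric.closedBall y r) ≤ (κ • volume) (Metric.closedBall y r) := by
    intro y r hrpos
    rw [Measure.smul_apply, smul_eq_mul, Real.volume_closedBall, Real.closedBall_eq_Icc]
    calc μ (Set.Icc (y - r) (y + r)) ≤ μ (Set.Ioo (y - 2 * r) (y + 2 * r)) :=
          measure_mono (fun z hz => ⟨by linarith [hz.1], by linarith [hz.2]⟩)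
      _ ≤ ENNReal.ofReal ((y + 2 * r - (y - 2 * r)) / c) := key _ _
      _ = κ * ENNReal.ofReal (2 * r) := by
          rw [hκ, ← ENNReal.ofReal_mul (by positivity)]
          congr 1
          field_simp
          ring
  haveI : IsLocallyFiniteMeasure (κ • volume) :=
    ⟨fun y => ⟨Metric.ball y 1, Metric.ball_mem_nhds y one_pos, by
      rw [Measure.smul_apply, smul_eq_mul, hκ, Real.volume_ball]
      exact ENNReal.mul_lt_top ENNReal.ofReal_lt_top ENNReal.ofReal_lt_top⟩⟩
  have hle : μ ≤ κ • volume := by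
    refine Measure.le_iff'.2 fun s => ?_
    refine (Besicovitch.vitaliFamily μ).measure_le_of_frequently_le (κ • volume)
      Measure.AbsolutelyContinuous.rfl s fun y _ => ?_
    refine (Besicovitch.tendsto_filterAt μ y).frequently ?_
    exact ((eventually_mem_nhdsWithin (s := Set.Ioi (0:ℝ)) (a := 0)).mono fun r hr => hball y r hr).frequently
  have hac : μ ≪ volume := hle.absolutelyContinuous.trans Measure.smul_absolutelyContinuous
  refine ⟨hac, μ.rnDeriv volume, (Measure.withDensity_rnDeriv_eq μ volume hac).symm, ?_⟩
  refine ae_le_of_forall_setLIntegral_le_of_sigmaFinite (μ.measurable_rnDeriv volume)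
    fun s hs _ => ?_
  rw [setLIntegral_const]
  calc ∫⁻ y in s, μ.rnDeriv volume y ∂volume ≤ μ s := Measure.setLIntegral_rnDeriv_le s
    _ ≤ (κ • volume) s := Measure.le_iff'.1 hle s
    _ = κ * volume s := by rw [Measure.smul_apply, smul_eq_mul]
end

section
/- Let x ∈ ℝ^N (in dimension d) satisfy |x^i - x^j| ≥ c N^{-1/d} for all i ≠ j, and suppose the empirical measures m^N_x converge narrowly to μ. Then for every Borel set A of finite Lebesgue measure, μ(A) ≤ (2^d/(c^d ω_d)) |A|; in particular μ has a density m with ‖m‖_∞ ≤ 2^d c^{-d} ω_d^{-1}. -/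
open MeasureTheory Filter Metric Set Bornology
open scoped ENNReal NNReal

open scoped Classical in
lemma stmt6_count (d : ℕ)
    [Nontrivial (EuclideanSpace ℝ (Fin d))]
    {N : ℕ} (y : Fin N → EuclideanSpace ℝ (Fin d)) {ρ : ℝ} (hρ : 0 < ρ)
    (hsep : ∀ i j : Fin N, i ≠ j → ρ + ρ ≤ dist (y i) (y j))
    (S : Set (EuclideanSpace ℝ (Fin d))) :
    ((Finset.univ.filter (fun i : Fin N => y i ∈ S)).card : ℝ≥0∞) *
      (ENNReal.ofReal (ρ ^ d) * volume (ball (0 : EuclideanSpace ℝ (Fin d)) 1))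
      ≤ volume (cthickening ρ S) := by
  classical
  set T := Finset.univ.filter (fun i : Fin N => y i ∈ S) with hT
  have hdisj : (↑T : Set (Fin N)).PairwiseDisjoint (fun i => ball (y i) ρ) := by
    intro i _ j _ hij
    exact ball_disjoint_ball (hsep i j hij)
  have hvol : ∀ i : Fin N, volume (ball (y i) ρ) =
      ENNReal.ofReal (ρ ^ d) * volume (ball (0 : EuclideanSpace ℝ (Fin d)) 1) := by
    intro i
    rw [Measure.addHaar_ball volume (y i) hρ.le, finrank_euclideanSpace_fin]
  calc ((T.card : ℝ≥0∞)) * (ENNReal.ofReal (ρ ^ d) * volume (ball (0 : EuclideanSpace ℝ (Fin d)) 1))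
      = ∑ i ∈ T, volume (ball (y i) ρ) := by
        simp [hvol, Finset.sum_const, nsmul_eq_mul]
    _ = volume (⋃ i ∈ T, ball (y i) ρ) :=
        (measure_biUnion_finset hdisj (fun i _ => measurableSet_ball)).symm
    _ ≤ volume (cthickening ρ S) := by
        refine measure_mono (iUnion₂_subset fun i hi => ?_)
        have hiS : y i ∈ S := by simpa [hT] using hi
        exact (ball_subset_thickening hiS ρ).trans (thickening_subset_cthickening ρ S)


open scoped Classical in
lemma stmt6_compact (d : ℕ) (hd : 1 ≤ d) (c : ℝ) (hc : 0 < c)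
    (x : (N : ℕ) → Fin N → EuclideanSpace ℝ (Fin d))
    (hdist : ∀ N, ∀ i j : Fin N, i ≠ j →
      c / (N : ℝ) ^ ((1 : ℝ) / d) ≤ ‖x N i - x N j‖)
    (μ : Measure (EuclideanSpace ℝ (Fin d))) [IsProbabilityMeasure μ]
    (hconv : ∀ g : BoundedContinuousFunction (EuclideanSpace ℝ (Fin d)) ℝ,
      Tendsto (fun N : ℕ => (1 / (N : ℝ)) * ∑ i : Fin N, g (x N i)) atTop
        (nhds (∫ y, g y ∂μ)))
    (ωd : ℝ) (hωd : ωd = (volume (Metric.ball (0 : EuclideanSpace ℝ (Fin d)) 1)).toReal)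
    (K : Set (EuclideanSpace ℝ (Fin d))) (hK : IsCompact K) :
    μ K ≤ ENNReal.ofReal (2 ^ d / (c ^ d * ωd)) * volume K := by
  haveI : Nontrivial (EuclideanSpace ℝ (Fin d)) :=
    Module.nontrivial_of_finrank_pos (R := ℝ)
      (by rw [finrank_euclideanSpace_fin]; omega)
  set V1 : ℝ≥0∞ := volume (ball (0 : EuclideanSpace ℝ (Fin d)) 1) with hV1
  have hV1pos : 0 < V1 := measure_ball_pos _ _ one_pos
  have hV1top : V1 ≠ ∞ := measure_ball_lt_top.ne
  have hωdpos : 0 < ωd := by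
    rw [hωd]; exact ENNReal.toReal_pos hV1pos.ne' hV1top
  set C : ℝ := 2 ^ d / (c ^ d * ωd) with hC
  have hCpos : 0 < C := by positivity
  -- main bound for each δ > 0
  have main : ∀ δ : ℝ, 0 < δ →
      μ K ≤ ENNReal.ofReal C * volume (cthickening (2 * δ) K) := by
    intro δ hδ
    set g := thickenedIndicator hδ K with hg
    set G : BoundedContinuousFunction (EuclideanSpace ℝ (Fin d)) ℝ :=
      BoundedContinuousFunction.comp _ isometry_subtype_coe.lipschitz g with hG
    have hGg : ∀ z, G z = (g z : ℝ) := fun z => rfl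
    set W := volume (cthickening (2 * δ) K) with hW
    have hWfin : W ≠ ∞ := (hK.isBounded.cthickening.measure_lt_top).ne
    -- μ K ≤ ofReal (∫ G)
    have hμK : μ K ≤ ENNReal.ofReal (∫ z, G z ∂μ) := by
      refine (measure_le_lintegral_thickenedIndicator μ hK.isClosed.measurableSet hδ).trans ?_
      rw [lintegral_coe_eq_integral (fun z => g z)
        (BoundedContinuousFunction.integrable_of_nnreal μ g)]
      exact le_of_eq rfl
    -- eventual bound on the discrete sums
    have hρδ : ∀ᶠ N : ℕ in atTop, c / (N : ℝ) ^ ((1 : ℝ) / d) / 2 ≤ δ := by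
      have h1 : Tendsto (fun N : ℕ => (N : ℝ) ^ ((1 : ℝ) / d)) atTop atTop :=
        (tendsto_rpow_atTop (by positivity)).comp tendsto_natCast_atTop_atTop
      have h2 : Tendsto (fun N : ℕ => c / (N : ℝ) ^ ((1 : ℝ) / d) / 2) atTop (nhds 0) := by
        simpa using (h1.const_div_atTop c).div_const 2
      exact h2.eventually (eventually_le_nhds hδ)
    have hbound : ∀ᶠ N : ℕ in atTop,
        (1 / (N : ℝ)) * ∑ i : Fin N, G (x N i) ≤ C * W.toReal := by
      filter_upwards [eventually_ge_atTop 1, hρδ] with N hN hNδ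
      have hNpos : (0 : ℝ) < N := by exact_mod_cast hN
      set r : ℝ := c / (N : ℝ) ^ ((1 : ℝ) / d) with hr
      have hrpos : 0 < r := div_pos hc (Real.rpow_pos_of_pos hNpos _)
      set ρ : ℝ := r / 2 with hρ'
      have hρpos : 0 < ρ := by positivity
      set S := cthickening δ K with hS
      set T := Finset.univ.filter (fun i : Fin N => x N i ∈ S) with hT
      -- sum bound by the count
      have hsum : ∑ i : Fin N, G (x N i) ≤ T.card := by
        have h0 : ∑ i : Fin N, G (x N i) = ∑ i ∈ T, G (x N i) := by
          refine (Finset.sum_subset T.subset_univ fun i _ hi => ?_).symm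
          have : x N i ∉ thickening δ K := fun h => hi (Finset.mem_filter.2
            ⟨Finset.mem_univ _, thickening_subset_cthickening δ K h⟩)
          rw [hGg, thickenedIndicator_zero hδ K this, NNReal.coe_zero]
        rw [h0]
        calc ∑ i ∈ T, G (x N i) ≤ ∑ _i ∈ T, (1 : ℝ) := by
              refine Finset.sum_le_sum fun i _ => ?_
              rw [hGg]
              exact_mod_cast thickenedIndicator_le_one hδ K (x N i)
          _ = T.card := by simp
      -- count bound by volume
      have hsep : ∀ i j : Fin N, i ≠ j → ρ + ρ ≤ dist (x N i) (x N j) := by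
        intro i j hij
        rw [dist_eq_norm]
        have := hdist N i j hij
        rw [← hr] at this
        linarith
      have hkey := stmt6_count d (x N) hρpos hsep S
      have hsub : cthickening ρ S ⊆ cthickening (2 * δ) K := by
        refine (cthickening_cthickening_subset hρpos.le hδ.le K).trans
          (cthickening_mono (by linarith) K)
      have hkey2 : (T.card : ℝ≥0∞) * (ENNReal.ofReal (ρ ^ d) * V1) ≤ W :=
        (hkey.trans (measure_mono hsub))
      have hreal : (T.card : ℝ) * (ρ ^ d * ωd) ≤ W.toReal := by
        have := ENNReal.toReal_mono hWfin hkey2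
        rwa [ENNReal.toReal_mul, ENNReal.toReal_mul, ENNReal.toReal_natCast,
          ENNReal.toReal_ofReal (by positivity : (0:ℝ) ≤ ρ ^ d), ← hωd] at this
      -- ρ^d = c^d / (2^d * N)
      have hNd : ((N : ℝ) ^ ((1 : ℝ) / d)) ^ d = N := by
        have hd0 : (d : ℝ) ≠ 0 := by exact_mod_cast (by omega : d ≠ 0)
        rw [← Real.rpow_natCast ((N : ℝ) ^ ((1 : ℝ) / d)) d,
          ← Real.rpow_mul (Nat.cast_nonneg N), one_div, inv_mul_cancel₀ hd0, Real.rpow_one]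
      have hρd : ρ ^ d = c ^ d / (2 ^ d * N) := by
        have hNr : (0 : ℝ) < (N : ℝ) ^ ((1 : ℝ) / d) := Real.rpow_pos_of_pos hNpos _
        rw [hρ', hr, div_div, div_pow, mul_pow, hNd, mul_comm ((N:ℝ)) _]
      calc (1 / (N : ℝ)) * ∑ i : Fin N, G (x N i)
          ≤ (1 / (N : ℝ)) * T.card := by
            apply mul_le_mul_of_nonneg_left hsum (by positivity)
        _ = ((T.card : ℝ) * (ρ ^ d * ωd)) * (2 ^ d / (c ^ d * ωd)) := by
            rw [hρd]; field_simp
        _ ≤ W.toReal * (2 ^ d / (c ^ d * ωd)) := by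
            apply mul_le_mul_of_nonneg_right hreal (by positivity)
        _ = C * W.toReal := by rw [hC]; ring
    have hint : ∫ z, G z ∂μ ≤ C * W.toReal := le_of_tendsto (hconv G) hbound
    calc μ K ≤ ENNReal.ofReal (∫ z, G z ∂μ) := hμK
      _ ≤ ENNReal.ofReal (C * W.toReal) := ENNReal.ofReal_le_ofReal hint
      _ = ENNReal.ofReal C * ENNReal.ofReal W.toReal :=
          ENNReal.ofReal_mul hCpos.le
      _ = ENNReal.ofReal C * W := by rw [ENNReal.ofReal_toReal hWfin]
  -- take δ → 0
  have hfin : ∃ R > 0, volume (cthickening R K) ≠ ∞ :=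
    ⟨1, one_pos, (hK.isBounded.cthickening.measure_lt_top).ne⟩
  have h0 : Tendsto (fun δ : ℝ => 2 * δ) (nhdsWithin 0 (Set.Ioi 0)) (nhds 0) := by
    have : Tendsto (fun δ : ℝ => 2 * δ) (nhds 0) (nhds 0) := by
      simpa using (continuous_mul_left (2 : ℝ)).tendsto (0 : ℝ)
    exact this.mono_left nhdsWithin_le_nhds
  have h2 : Tendsto (fun δ : ℝ => ENNReal.ofReal C * volume (cthickening (2 * δ) K))
      (nhdsWithin 0 (Set.Ioi 0)) (nhds (ENNReal.ofReal C * volume K)) :=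
    ENNReal.Tendsto.const_mul
      (((tendsto_measure_cthickening_of_isClosed hfin hK.isClosed).comp h0))
      (Or.inr ENNReal.ofReal_ne_top)
  exact ge_of_tendsto h2 (eventually_nhdsWithin_of_forall fun δ hδ => main δ hδ)

theorem stmt_6 (d : ℕ) (hd : 1 ≤ d) (c : ℝ) (hc : 0 < c)
    (x : (N : ℕ) → Fin N → EuclideanSpace ℝ (Fin d))
    (hdist : ∀ N, ∀ i j : Fin N, i ≠ j →
      c / (N : ℝ) ^ ((1 : ℝ) / d) ≤ ‖x N i - x N j‖)
    (μ : Measure (EuclideanSpace ℝ (Fin d))) [IsProbabilityMeasure μ]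
    (hconv : ∀ g : BoundedContinuousFunction (EuclideanSpace ℝ (Fin d)) ℝ,
      Tendsto (fun N : ℕ => (1 / (N : ℝ)) * ∑ i : Fin N, g (x N i)) atTop
        (nhds (∫ y, g y ∂μ)))
    (ωd : ℝ) (hωd : ωd = (volume (Metric.ball (0 : EuclideanSpace ℝ (Fin d)) 1)).toReal) :
    (∀ A : Set (EuclideanSpace ℝ (Fin d)), MeasurableSet A → volume A < ⊤ →
      (μ A).toReal ≤ (2 ^ d / (c ^ d * ωd)) * (volume A).toReal) ∧
    ∃ m : EuclideanSpace ℝ (Fin d) → ℝ≥0∞, μ = volume.withDensity m ∧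
      ∀ᵐ y ∂volume, m y ≤ ENNReal.ofReal (2 ^ d / (c ^ d * ωd)) := by
  have hωdpos : 0 < ωd := by
    rw [hωd]
    exact ENNReal.toReal_pos (measure_ball_pos _ _ one_pos).ne' measure_ball_lt_top.ne
  set C : ℝ := 2 ^ d / (c ^ d * ωd) with hC
  have hCpos : 0 < C := by positivity
  have hC0 : ENNReal.ofReal C ≠ 0 := by
    simp [ENNReal.ofReal_eq_zero, not_le, hCpos]
  -- bound for all measurable sets
  have hmeas : ∀ A : Set (EuclideanSpace ℝ (Fin d)), MeasurableSet A →
      μ A ≤ ENNReal.ofReal C * volume A := by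
    intro A hA
    rw [hA.measure_eq_iSup_isCompact]
    refine iSup₂_le fun K hKA => iSup_le fun hKc => ?_
    exact (stmt6_compact d hd c hc x hdist μ hconv ωd hωd K hKc).trans
      (mul_le_mul_right (measure_mono hKA) _)
  constructor
  · intro A hA hAvol
    have h1 := hmeas A hA
    have h2 : ENNReal.ofReal C * volume A ≠ ∞ :=
      ENNReal.mul_ne_top ENNReal.ofReal_ne_top hAvol.ne
    calc (μ A).toReal ≤ (ENNReal.ofReal C * volume A).toReal := ENNReal.toReal_mono h2 h1
      _ = C * (volume A).toReal := by
          rw [ENNReal.toReal_mul, ENNReal.toReal_ofReal hCpos.le]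
  · set n : ℝ≥0 := C.toNNReal with hn
    have hCn : ENNReal.ofReal C = (n : ℝ≥0∞) := rfl
    have hn0 : n ≠ 0 := by
      simp [hn, Real.toNNReal_eq_zero, not_le, hCpos]
    have hle : μ ≤ n • volume := by
      refine Measure.le_iff.2 fun s hs => ?_
      have := hmeas s hs
      rw [hCn] at this
      rw [Measure.smul_apply, ENNReal.smul_def, smul_eq_mul]; exact this
    have hac : μ ≪ volume := by
      refine Measure.AbsolutelyContinuous.mk fun s hs h0 => ?_
      have h' : μ s ≤ 0 := (hle s).trans (le_of_eq (by rw [Measure.smul_apply, h0, smul_zero]))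
      simpa using h'
    refine ⟨μ.rnDeriv volume, (Measure.withDensity_rnDeriv_eq _ _ hac).symm, ?_⟩
    have h1 : μ.rnDeriv (n • volume) ≤ᵐ[n • volume] 1 :=
      Measure.rnDeriv_le_one_of_le hle
    have h1' : μ.rnDeriv (n • volume) ≤ᵐ[volume] 1 :=
      (Measure.ae_smul_measure_iff hn0).1 h1
    have h2 : μ.rnDeriv (n • volume) =ᵐ[volume] n⁻¹ • μ.rnDeriv volume :=
      Measure.rnDeriv_smul_right' μ volume hn0
    filter_upwards [h1', h2] with z hz1 hz2
    rw [hz2] at hz1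
    have hz1' : ((n : ℝ≥0∞))⁻¹ * μ.rnDeriv volume z ≤ 1 := by
      simpa [ENNReal.smul_def, ENNReal.coe_inv hn0] using hz1
    rw [hCn]
    calc μ.rnDeriv volume z
        = (n : ℝ≥0∞) * (((n : ℝ≥0∞))⁻¹ * μ.rnDeriv volume z) := by
          rw [← mul_assoc, ENNReal.mul_inv_cancel (by exact_mod_cast hn0) ENNReal.coe_ne_top,
            one_mul]
      _ ≤ (n : ℝ≥0∞) * 1 := mul_le_mul_right hz1' _
      _ = (n : ℝ≥0∞) := mul_one _
end

section
/- Suppose x^1 ≤ x^2 ≤ ... ≤ x^N in ℝ satisfy x^{i+1} - x^i = c/N for all i, and the empirical measures m^N_x converge narrowly to a probability measure μ. Then there exists a ∈ ℝ such that μ = c^{-1} χ_{(a,a+c)} dx, i.e. μ has density c^{-1} on an interval of length c. -/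
open MeasureTheory Filter
open scoped ENNReal
open scoped BoundedContinuousFunction

lemma aux_floor_tendsto (n : ℕ → ℕ) (hn : Tendsto n atTop atTop) (t : ℝ) :
    Tendsto (fun k => ((⌊(n k : ℝ) * t⌋ : ℝ) / (n k : ℝ))) atTop (nhds t) := by
  have h0 : Tendsto (fun k => (1:ℝ) / (n k : ℝ)) atTop (nhds 0) :=
    tendsto_one_div_atTop_nhds_zero_nat.comp hn
  have hlow : Tendsto (fun k => t - 1 / (n k : ℝ)) atTop (nhds t) := by
    simpa using tendsto_const_nhds.sub h0
  refine tendsto_of_tendsto_of_tendsto_of_le_of_le' hlow tendsto_const_nhds ?_ ?_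
  · filter_upwards [hn.eventually (eventually_ge_atTop 1)] with k hk
    have hk' : (0:ℝ) < (n k : ℝ) := by
      have : (1:ℝ) ≤ (n k : ℝ) := by exact_mod_cast hk
      linarith
    rw [le_div_iff₀ hk']
    have h1 : (n k : ℝ) * t - 1 < (⌊(n k : ℝ) * t⌋ : ℝ) := Int.sub_one_lt_floor _
    have h2 : (t - 1 / (n k:ℝ)) * (n k:ℝ) = (n k:ℝ) * t - 1 := by field_simp
    linarith
  · filter_upwards [hn.eventually (eventually_ge_atTop 1)] with k hk
    have hk' : (0:ℝ) < (n k : ℝ) := by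
      have : (1:ℝ) ≤ (n k : ℝ) := by exact_mod_cast hk
      linarith
    rw [div_le_iff₀ hk']
    calc (⌊(n k:ℝ)*t⌋:ℝ) ≤ (n k:ℝ)*t := Int.floor_le _
    _ = t * (n k:ℝ) := by ring

lemma aux_meas (g : ℝ →ᵇ ℝ) (b c : ℝ) (m : ℕ) :
    Measurable (fun t : ℝ => g (b + c * ((⌊(m:ℝ)*t⌋ : ℝ) / (m:ℝ)))) := by
  apply g.continuous.measurable.comp
  apply measurable_const.add
  apply measurable_const.mul
  apply Measurable.div_const
  exact measurable_from_top.comp ((measurable_const_mul ((m:ℝ))).floor)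

lemma aux_intable (g : ℝ →ᵇ ℝ) (b c : ℝ) (m : ℕ) (u v : ℝ) :
    IntervalIntegrable (fun t : ℝ => g (b + c * ((⌊(m:ℝ)*t⌋ : ℝ) / (m:ℝ)))) volume u v := by
  rw [intervalIntegrable_iff]
  apply MeasureTheory.Integrable.mono' (g := fun _ => ‖g‖)
  · refine (integrableOn_const_iff).mpr (Or.inr ?_)
    rw [Set.uIoc]
    exact measure_Ioc_lt_top
  · exact (aux_meas g b c m).aestronglyMeasurable
  · exact Filter.Eventually.of_forall fun t => g.norm_coe_le_norm _

lemma aux_sum_eq (g : ℝ →ᵇ ℝ) (c : ℝ) (N : ℕ) (hN : 0 < N) (b : ℝ) :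
    (1/(N:ℝ)) * ∑ i : Fin N, g (b + (i:ℝ) * (c/(N:ℝ)))
      = ∫ t in Set.Ioc (0:ℝ) 1, g (b + c * ((⌊(N:ℝ)*t⌋ : ℝ)/(N:ℝ))) := by
  have hN' : (0:ℝ) < (N:ℝ) := by exact_mod_cast hN
  set f : ℝ → ℝ := fun t => g (b + c * ((⌊(N:ℝ)*t⌋ : ℝ)/(N:ℝ))) with hf
  have key : ∀ k : ℕ, k < N →
      (∫ t in ((k:ℝ)/N)..(((k:ℝ)+1)/N), f t) = (1/(N:ℝ)) * g (b + (k:ℝ) * (c/(N:ℝ))) := by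
    intro k hk
    have hle : (k:ℝ)/N ≤ ((k:ℝ)+1)/N := by gcongr; linarith
    have hae : ∀ᵐ t ∂(volume : Measure ℝ), t ∈ Set.uIoc ((k:ℝ)/N) (((k:ℝ)+1)/N) →
        f t = g (b + (k:ℝ) * (c/(N:ℝ))) := by
      filter_upwards [(Set.countable_singleton ((((k:ℝ)+1)/N))).ae_notMem (volume : Measure ℝ)] with t ht htm
      rw [Set.mem_singleton_iff] at ht
      rw [Set.uIoc_of_le hle] at htm
      have ht2 : t < ((k:ℝ)+1)/N := lt_of_le_of_ne htm.2 ht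
      have ht1 : (k:ℝ)/N < t := htm.1
      have hfl : ⌊(N:ℝ)*t⌋ = (k:ℤ) := by
        rw [Int.floor_eq_iff]
        constructor
        · push_cast
          rw [div_lt_iff₀ hN'] at ht1
          nlinarith
        · push_cast
          rw [lt_div_iff₀ hN'] at ht2
          nlinarith
      simp only [hf, hfl]
      norm_num
      ring_nf
    rw [intervalIntegral.integral_congr_ae hae, intervalIntegral.integral_const]
    have : ((k:ℝ)+1)/N - (k:ℝ)/N = 1/(N:ℝ) := by field_simp; ring
    rw [this]
    simp [smul_eq_mul]
  have adj := intervalIntegral.sum_integral_adjacent_intervals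
      (a := fun k : ℕ => (k:ℝ)/N) (n := N) (f := f) (μ := volume)
      (fun k _ => by push_cast; exact aux_intable g b c N _ _)
  push_cast at adj
  have h0 : ((0:ℝ))/N = 0 := by simp
  have h1 : ((N:ℝ))/N = 1 := div_self hN'.ne'
  rw [h0, h1] at adj
  rw [← intervalIntegral.integral_of_le zero_le_one, ← adj, Finset.mul_sum,
    Fin.sum_univ_eq_sum_range (fun k : ℕ => 1/(N:ℝ) * g (b + (k:ℝ) * (c/(N:ℝ))))]
  exact Finset.sum_congr rfl fun k hk => ((key k (Finset.mem_range.mp hk)).symm)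

lemma aux_riemann (g : ℝ →ᵇ ℝ) (c : ℝ) (n : ℕ → ℕ) (hn : Tendsto n atTop atTop)
    (b : ℕ → ℝ) (a : ℝ) (hb : Tendsto b atTop (nhds a)) :
    Tendsto (fun k => ∫ t in Set.Ioc (0:ℝ) 1, g (b k + c * ((⌊(n k : ℝ) * t⌋ : ℝ)/(n k : ℝ))))
      atTop (nhds (∫ t in Set.Ioc (0:ℝ) 1, g (a + c * t))) := by
  apply MeasureTheory.tendsto_integral_of_dominated_convergence (fun _ => ‖g‖)
  · intro k
    exact ((aux_meas g (b k) c (n k)).aestronglyMeasurable).restrict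
  · refine (integrableOn_const_iff).mpr (Or.inr ?_)
    exact measure_Ioc_lt_top
  · intro k
    exact Filter.Eventually.of_forall fun t => g.norm_coe_le_norm _
  · apply Filter.Eventually.of_forall
    intro t
    have h1 : Tendsto (fun k => b k + c * ((⌊(n k : ℝ) * t⌋ : ℝ)/(n k : ℝ))) atTop
        (nhds (a + c * t)) :=
      hb.add (tendsto_const_nhds.mul (aux_floor_tendsto n hn t))
    exact ((g.continuous.tendsto _).comp h1)

theorem stmt_7 (c : ℝ) (hc : 0 < c)
    (x : (N : ℕ) → Fin N → ℝ)
    (hord : ∀ N, ∀ i j : Fin N, i ≤ j → x N i ≤ x N j)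
    (hspace : ∀ N, ∀ i j : Fin N, (i : ℕ) + 1 = j → x N j - x N i = c / N)
    (μ : Measure ℝ) [IsProbabilityMeasure μ]
    (hconv : ∀ g : BoundedContinuousFunction ℝ ℝ,
      Tendsto (fun N : ℕ => (1 / (N : ℝ)) * ∑ i : Fin N, g (x N i)) atTop
        (nhds (∫ y, g y ∂μ))) :
    ∃ a : ℝ, μ = ENNReal.ofReal c⁻¹ • volume.restrict (Set.Ioo a (a + c)) := by
  classical
  set A : ℕ → ℝ := fun N => if h : 0 < N then x N ⟨0, h⟩ else 0 with hA
  -- arithmetic progression formula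
  have hx : ∀ N, 0 < N → ∀ (m : ℕ) (hm : m < N), x N ⟨m, hm⟩ = A N + (m:ℝ) * (c / N) := by
    intro N hN m
    induction m with
    | zero =>
      intro hm
      simp [hA, dif_pos hN]
    | succ p ih =>
      intro hm
      have hp : p < N := Nat.lt_of_succ_lt hm
      have hs := hspace N ⟨p, hp⟩ ⟨p+1, hm⟩ rfl
      have ihp := ih hp
      have hexp : ((p:ℝ)+1) * (c/(N:ℝ)) = (p:ℝ) * (c/(N:ℝ)) + c/(N:ℝ) := by ring
      push_cast
      push_cast at hs
      linarith
  -- choose R with μ (Icc (-R) R) > 1/2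
  obtain ⟨R, hR⟩ : ∃ R : ℕ, (1/2 : ℝ≥0∞) < μ (Set.Icc (-(R:ℝ)) (R:ℝ)) := by
    have hmono : Monotone (fun R : ℕ => Set.Icc (-(R:ℝ)) (R:ℝ)) := by
      intro p q hpq
      apply Set.Icc_subset_Icc <;> · simp; exact_mod_cast hpq
    have hU : (⋃ R : ℕ, Set.Icc (-(R:ℝ)) (R:ℝ)) = Set.univ := by
      ext t
      simp only [Set.mem_iUnion, Set.mem_univ, iff_true, Set.mem_Icc]
      obtain ⟨R, hR⟩ := exists_nat_ge |t|
      exact ⟨R, (abs_le.mp hR).1, (abs_le.mp hR).2⟩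
    have htend := tendsto_measure_iUnion_atTop (μ := μ) hmono
    rw [hU, measure_univ] at htend
    have : ∀ᶠ R : ℕ in atTop, (1/2 : ℝ≥0∞) < μ (Set.Icc (-(R:ℝ)) (R:ℝ)) :=
      htend.eventually_const_lt (by norm_num)
    exact this.exists
  -- bump function
  have cont : Continuous fun t : ℝ => max 0 (min 1 ((R:ℝ)+1 - |t|)) := by
    fun_prop
  have hval : ∀ t : ℝ, max 0 (min 1 ((R:ℝ)+1 - |t|)) ∈ Set.Icc (0:ℝ) 1 := by
    intro t
    constructor
    · exact le_max_left _ _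
    · exact max_le zero_le_one (min_le_left _ _)
  set g₀ : ℝ →ᵇ ℝ := BoundedContinuousFunction.mkOfBound ⟨_, cont⟩ 1 (by
    intro p q
    have h1 := hval p; have h2 := hval q
    simp only [Set.mem_Icc] at h1 h2
    rw [Real.dist_eq, abs_sub_le_iff]
    constructor <;> simp only [ContinuousMap.coe_mk] <;> linarith) with hg₀
  have hg₀app : ∀ t : ℝ, g₀ t = max 0 (min 1 ((R:ℝ)+1 - |t|)) := fun t => rfl
  have hg₀nonneg : ∀ t : ℝ, 0 ≤ g₀ t := fun t => (hval t).1
  have hg₀one : ∀ t ∈ Set.Icc (-(R:ℝ)) (R:ℝ), g₀ t = 1 := by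
    intro t ht
    rw [Set.mem_Icc] at ht
    have habs : |t| ≤ (R:ℝ) := abs_le.mpr ht
    rw [hg₀app, min_eq_left (by linarith), max_eq_right zero_le_one]
  have hg₀zero : ∀ t : ℝ, (R:ℝ)+1 ≤ |t| → g₀ t = 0 := by
    intro t ht
    rw [hg₀app, max_eq_left]
    exact le_trans (min_le_right _ _) (by linarith)
  -- ∫ g₀ dμ > 0
  have hLpos : 0 < ∫ y, g₀ y ∂μ := by
    have hint : Integrable g₀ μ := g₀.integrable μ
    have h1 : ∫ t in Set.Icc (-(R:ℝ)) (R:ℝ), g₀ t ∂μ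
        = (μ (Set.Icc (-(R:ℝ)) (R:ℝ))).toReal := by
      rw [setIntegral_congr_fun measurableSet_Icc hg₀one]
      simp
      rfl
    have h2 : ∫ t in Set.Icc (-(R:ℝ)) (R:ℝ), g₀ t ∂μ ≤ ∫ y, g₀ y ∂μ :=
      setIntegral_le_integral hint (Filter.Eventually.of_forall hg₀nonneg)
    have h3 : (0:ℝ) < (μ (Set.Icc (-(R:ℝ)) (R:ℝ))).toReal := by
      apply ENNReal.toReal_pos
      · intro h0
        rw [h0] at hR
        simp at hR
      · exact measure_ne_top μ _
    linarith
  -- eventual localization of A N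
  have hloc : ∀ᶠ N : ℕ in atTop, 1 ≤ N ∧ A N ∈ Set.Icc (-((R:ℝ)+1+c)) ((R:ℝ)+1) := by
    filter_upwards [eventually_ge_atTop 1, (hconv g₀).eventually_const_lt hLpos]
      with N h1N hE
    refine ⟨h1N, ?_⟩
    by_contra hcon
    have hzero : ∀ i : Fin N, g₀ (x N i) = 0 := by
      intro i
      have hNpos : 0 < N := h1N
      have hNpos' : (0:ℝ) < (N:ℝ) := by exact_mod_cast hNpos
      have hxi : x N i = A N + (i:ℝ) * (c / N) := by
        have := hx N hNpos i.1 i.2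
        simpa using this
      have h0le : 0 ≤ (i:ℝ) * (c/(N:ℝ)) := by positivity
      have hlec : (i:ℝ) * (c/(N:ℝ)) ≤ c := by
        have hiN : (i:ℝ) ≤ (N:ℝ) := by exact_mod_cast (i.2.le)
        calc (i:ℝ) * (c/(N:ℝ)) ≤ (N:ℝ) * (c/(N:ℝ)) := by
              apply mul_le_mul_of_nonneg_right hiN (by positivity)
          _ = c := by field_simp
      rw [Set.mem_Icc, not_and_or] at hcon
      rcases hcon with hcon | hcon
      · push_neg at hcon
        apply hg₀zero
        rw [le_abs]
        right
        rw [hxi]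
        linarith
      · push_neg at hcon
        apply hg₀zero
        rw [le_abs]
        left
        rw [hxi]
        linarith
    rw [Finset.sum_congr rfl (fun i _ => hzero i)] at hE
    simp at hE
  obtain ⟨N0, hN0⟩ := eventually_atTop.mp hloc
  -- extract convergent subsequence of A
  obtain ⟨a, -, φ, hφmono, hφtend⟩ :=
    isCompact_Icc.tendsto_subseq (x := fun n => A (N0 + n))
      (fun n => (hN0 (N0 + n) (Nat.le_add_right _ _)).2)
  refine ⟨a, ?_⟩
  set ψ : ℕ → ℕ := fun k => N0 + φ k with hψ
  have hψmono : StrictMono ψ := fun p q hpq => Nat.add_lt_add_left (hφmono hpq) N0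
  have hψtop : Tendsto ψ atTop atTop := hψmono.tendsto_atTop
  have hψpos : ∀ k, 0 < ψ k := fun k =>
    lt_of_lt_of_le Nat.zero_lt_one (le_trans (hN0 (ψ k) (Nat.le_add_right _ _)).1 le_rfl)
  have hAψ : Tendsto (fun k => A (ψ k)) atTop (nhds a) := hφtend
  -- key integral identity
  set ν : Measure ℝ := ENNReal.ofReal c⁻¹ • volume.restrict (Set.Ioo a (a + c)) with hν
  have hνuniv : ν Set.univ = 1 := by
    rw [hν, Measure.smul_apply, Measure.restrict_apply MeasurableSet.univ, Set.univ_inter,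
      Real.volume_Ioo, smul_eq_mul, ← ENNReal.ofReal_mul (by positivity)]
    rw [show a + c - a = c by ring]
    rw [inv_mul_cancel₀ hc.ne']
    simp
  have hνprob : IsProbabilityMeasure ν := ⟨hνuniv⟩
  have key : ∀ g : ℝ →ᵇ ℝ, ∫ y, g y ∂μ = ∫ y, g y ∂ν := by
    intro g
    have h1 : Tendsto (fun k => (1/(ψ k:ℝ)) * ∑ i : Fin (ψ k), g (x (ψ k) i)) atTop
        (nhds (∫ y, g y ∂μ)) := (hconv g).comp hψtop
    have h2 : (fun k => (1/(ψ k:ℝ)) * ∑ i : Fin (ψ k), g (x (ψ k) i))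
        = fun k => ∫ t in Set.Ioc (0:ℝ) 1,
            g (A (ψ k) + c * ((⌊(ψ k:ℝ)*t⌋ : ℝ)/(ψ k:ℝ))) := by
      funext k
      rw [← aux_sum_eq g c (ψ k) (hψpos k) (A (ψ k))]
      congr 1
      apply Finset.sum_congr rfl
      intro i _
      congr 1
      have := hx (ψ k) (hψpos k) i.1 i.2
      simpa using this
    rw [h2] at h1
    have h3 := aux_riemann g c ψ hψtop (fun k => A (ψ k)) a hAψ
    have heq : ∫ y, g y ∂μ = ∫ t in Set.Ioc (0:ℝ) 1, g (a + c * t) :=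
      tendsto_nhds_unique h1 h3
    rw [heq]
    -- compute both sides as c⁻¹ • ∫ y in a..(a+c)
    have hL : ∫ t in Set.Ioc (0:ℝ) 1, g (a + c * t)
        = c⁻¹ • ∫ y in a..(a + c), g y := by
      rw [← intervalIntegral.integral_of_le zero_le_one]
      have : (fun t => g (a + c * t)) = fun t => g (c * t + a) := by
        funext t; ring_nf
      rw [this, intervalIntegral.integral_comp_mul_add (fun y => g y) hc.ne' a]
      norm_num [add_comm]
    have hRHS : ∫ y, g y ∂ν = c⁻¹ • ∫ y in a..(a + c), g y := by
      rw [hν, integral_smul_measure, ENNReal.toReal_ofReal (by positivity)]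
      rw [← MeasureTheory.integral_Ioc_eq_integral_Ioo,
        ← intervalIntegral.integral_of_le (by linarith : a ≤ a + c)]
    rw [hL, hRHS]
  -- conclude by extensionality
  apply ext_of_forall_lintegral_eq_of_IsFiniteMeasure
  intro f
  have hcoe : Continuous fun t : ℝ => ((f t : ℝ)) := NNReal.continuous_coe.comp f.continuous
  obtain ⟨C, hC⟩ := f.map_bounded'
  set gf : ℝ →ᵇ ℝ := BoundedContinuousFunction.mkOfBound ⟨_, hcoe⟩ C (by
    intro p q
    have h := hC p q
    rw [NNReal.dist_eq] at h
    simp only [ContinuousMap.coe_mk]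
    rw [Real.dist_eq]
    exact h) with hgf
  have hgfapp : ∀ t, gf t = (f t : ℝ) := fun t => rfl
  have hμint : Integrable (fun t : ℝ => ((f t : ℝ))) μ :=
    BoundedContinuousFunction.integrable_of_nnreal μ f
  have hνint : Integrable (fun t : ℝ => ((f t : ℝ))) ν :=
    BoundedContinuousFunction.integrable_of_nnreal ν f
  rw [lintegral_coe_eq_integral _ hμint, lintegral_coe_eq_integral _ hνint]
  congr 1
  exact key gf
end

section
/- Let K : [0,∞) → [0,∞) be nonincreasing with K(|·|) locally integrable on ℝ^d. If x = (x^1,...,x^N) ∈ (ℝ^d)^N satisfies |x^i - x^j| ≥ δ := c N^{-1/d} for i ≠ j, then for every i and every r ≥ δ, Σ_{j ≠ i, x^j ∈ B_r(x^i)} K(|x^i - x^j|) ≤ (8^d N)/(c^d ω_d) ∫_{B_r(0)} K(|y|) dy. -/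
open MeasureTheory
open scoped ENNReal Classical

theorem stmt_8 (d : ℕ) (hd : 1 ≤ d) (c : ℝ) (hc : 0 < c)
    (K : ℝ → ℝ) (hK0 : ∀ r, 0 ≤ K r)
    (hKmono : ∀ r s : ℝ, 0 ≤ r → r ≤ s → K s ≤ K r)
    (hKloc : LocallyIntegrable (fun y : EuclideanSpace ℝ (Fin d) => K ‖y‖) volume)
    (N : ℕ) (x : Fin N → EuclideanSpace ℝ (Fin d))
    (δ : ℝ) (hδ : δ = c * (N : ℝ) ^ (-(1 : ℝ) / d))
    (hdist : ∀ i j : Fin N, i ≠ j → δ ≤ ‖x i - x j‖)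
    (ωd : ℝ) (hωd : ωd = (volume (Metric.ball (0 : EuclideanSpace ℝ (Fin d)) 1)).toReal)
    (i : Fin N) (r : ℝ) (hr : δ ≤ r) :
    ∑ j ∈ Finset.univ.filter (fun j : Fin N => j ≠ i ∧ x j ∈ Metric.ball (x i) r),
        K ‖x i - x j‖
      ≤ (8 ^ d * N) / (c ^ d * ωd) * ∫ y in Metric.ball (0 : EuclideanSpace ℝ (Fin d)) r, K ‖y‖ := by
  classical
  haveI : Nonempty (Fin d) := ⟨⟨0, hd⟩⟩
  haveI : Nontrivial (EuclideanSpace ℝ (Fin d)) :=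
    inferInstanceAs (Nontrivial (PiLp 2 (fun _ : Fin d => ℝ)))
  have hN : 0 < N := i.pos
  have hNR : (0 : ℝ) < N := by exact_mod_cast hN
  have hdR : (d : ℝ) ≠ 0 := by positivity
  have hδ0 : 0 < δ := by
    rw [hδ]; exact mul_pos hc (Real.rpow_pos_of_pos hNR _)
  have hδd : δ ^ d = c ^ d / N := by
    rw [hδ, mul_pow, ← Real.rpow_natCast ((N : ℝ) ^ (-(1 : ℝ) / d)) d,
      ← Real.rpow_mul hNR.le]
    have : (-(1 : ℝ) / d) * d = -1 := by field_simp
    rw [this, Real.rpow_neg_one]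
    ring
  set f : EuclideanSpace ℝ (Fin d) → ℝ := fun y => K ‖y‖ with hf
  set S := Finset.univ.filter (fun j : Fin N => j ≠ i ∧ x j ∈ Metric.ball (x i) r) with hS
  set ρ : ℝ := δ / 4 with hρ
  have hρ0 : 0 < ρ := by positivity
  set n : Fin N → EuclideanSpace ℝ (Fin d) := fun j => (1 - δ / (4 * ‖x j - x i‖)) • (x j - x i) with hn
  -- basic facts for j ∈ S
  have hmem : ∀ j ∈ S, j ≠ i ∧ δ ≤ ‖x j - x i‖ ∧ ‖x j - x i‖ < r := by
    intro j hj
    rw [hS, Finset.mem_filter] at hj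
    refine ⟨hj.2.1, ?_, ?_⟩
    · rw [norm_sub_rev]; exact hdist i j (Ne.symm hj.2.1)
    · have := hj.2.2
      rwa [Metric.mem_ball, dist_eq_norm] at this
  have hnormn : ∀ j ∈ S, ‖n j‖ = ‖x j - x i‖ - ρ := by
    intro j hj
    obtain ⟨-, hu, -⟩ := hmem j hj
    have hu0 : (0 : ℝ) < ‖x j - x i‖ := lt_of_lt_of_le hδ0 hu
    have hcoef : 0 ≤ 1 - δ / (4 * ‖x j - x i‖) := by
      rw [sub_nonneg, div_le_one (by positivity)]
      nlinarith
    simp only [hn]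
    rw [norm_smul, Real.norm_eq_abs, abs_of_nonneg hcoef, hρ]
    have hne : ‖x j - x i‖ ≠ 0 := ne_of_gt hu0
    field_simp
  have hnu : ∀ j ∈ S, ‖n j - (x j - x i)‖ = ρ := by
    intro j hj
    obtain ⟨-, hu, -⟩ := hmem j hj
    have hu0 : (0 : ℝ) < ‖x j - x i‖ := lt_of_lt_of_le hδ0 hu
    have : n j - (x j - x i) = (-(δ / (4 * ‖x j - x i‖))) • (x j - x i) := by
      simp only [hn]
      rw [sub_smul, one_smul, neg_smul]; abel
    rw [this, norm_smul, Real.norm_eq_abs, abs_neg, abs_of_nonneg (by positivity), hρ]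
    have hne : ‖x j - x i‖ ≠ 0 := ne_of_gt hu0
    field_simp
  -- the small balls are inside ball 0 r
  have hsub : ∀ j ∈ S, Metric.ball (n j) ρ ⊆ Metric.ball (0 : EuclideanSpace ℝ (Fin d)) r := by
    intro j hj z hz
    obtain ⟨-, hu, hur⟩ := hmem j hj
    rw [Metric.mem_ball, dist_eq_norm] at hz ⊢
    have h1 : ‖z‖ ≤ ‖n j‖ + ‖z - n j‖ := by
      calc ‖z‖ = ‖n j + (z - n j)‖ := by rw [show n j + (z - n j) = z from by abel]
        _ ≤ ‖n j‖ + ‖z - n j‖ := norm_add_le _ _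
    rw [hnormn j hj] at h1
    rw [sub_zero]
    nlinarith
  -- pointwise bound on the small balls
  have hpt : ∀ j ∈ S, ∀ z ∈ Metric.ball (n j) ρ, K ‖x i - x j‖ ≤ f z := by
    intro j hj z hz
    obtain ⟨-, hu, -⟩ := hmem j hj
    rw [Metric.mem_ball, dist_eq_norm] at hz
    have h1 : ‖z‖ ≤ ‖n j‖ + ‖z - n j‖ := by
      calc ‖z‖ = ‖n j + (z - n j)‖ := by rw [show n j + (z - n j) = z from by abel]
        _ ≤ ‖n j‖ + ‖z - n j‖ := norm_add_le _ _
    rw [hnormn j hj] at h1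
    have h2 : ‖z‖ ≤ ‖x i - x j‖ := by rw [norm_sub_rev]; nlinarith
    exact hKmono ‖z‖ ‖x i - x j‖ (norm_nonneg _) h2
  -- disjointness
  have hdisj : (S : Set (Fin N)).Pairwise (Function.onFun Disjoint fun j => Metric.ball (n j) ρ) := by
    intro j hj k hk hjk
    simp only [Function.onFun]
    apply Metric.ball_disjoint_ball
    rw [dist_eq_norm]
    have hjS : j ∈ S := hj
    have hkS : k ∈ S := hk
    have h1 : ‖x j - x k‖ ≤ ‖(x j - x i) - n j‖ + ‖n j - n k‖ + ‖n k - (x k - x i)‖ := by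
      have e : x j - x k = ((x j - x i) - n j) + ((n j - n k) + (n k - (x k - x i))) := by abel
      calc ‖x j - x k‖ = ‖((x j - x i) - n j) + ((n j - n k) + (n k - (x k - x i)))‖ := by rw [← e]
        _ ≤ ‖(x j - x i) - n j‖ + (‖n j - n k‖ + ‖n k - (x k - x i)‖) := by
            exact (norm_add_le _ _).trans (by gcongr; exact norm_add_le _ _)
        _ = ‖(x j - x i) - n j‖ + ‖n j - n k‖ + ‖n k - (x k - x i)‖ := by ring
    have h2 : ‖(x j - x i) - n j‖ = ρ := by rw [norm_sub_rev]; exact hnu j hjS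
    have h3 : ‖n k - (x k - x i)‖ = ρ := hnu k hkS
    have h4 : δ ≤ ‖x j - x k‖ := hdist j k hjk
    rw [h2, h3] at h1
    rw [hρ] at *
    linarith
  -- integrability
  have hfi : IntegrableOn f (Metric.ball (0 : EuclideanSpace ℝ (Fin d)) r) volume := by
    exact (hKloc.integrableOn_isCompact (isCompact_closedBall (0 : EuclideanSpace ℝ (Fin d)) r)).mono_set
      Metric.ball_subset_closedBall
  have hfij : ∀ j ∈ S, IntegrableOn f (Metric.ball (n j) ρ) volume :=
    fun j hj => hfi.mono_set (hsub j hj)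
  -- volume of small balls
  have hfin : Module.finrank ℝ (EuclideanSpace ℝ (Fin d)) = d := finrank_euclideanSpace_fin
  have hωd0 : 0 < ωd := by
    rw [hωd]
    exact ENNReal.toReal_pos (Metric.measure_ball_pos volume _ one_pos).ne'
      (measure_ball_lt_top).ne
  have hvol : ∀ y : EuclideanSpace ℝ (Fin d), (volume (Metric.ball y ρ)).toReal = ρ ^ d * ωd := by
    intro y
    rw [Measure.addHaar_ball volume y hρ0.le, hfin, ENNReal.toReal_mul,
      ENNReal.toReal_ofReal (by positivity), hωd]
  -- key estimate
  set I := ∫ y in Metric.ball (0 : EuclideanSpace ℝ (Fin d)) r, K ‖y‖ with hI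
  have hI0 : 0 ≤ I := by
    apply setIntegral_nonneg measurableSet_ball
    intro z _; exact hK0 _
  have key : ∑ j ∈ S, K ‖x i - x j‖ * (ρ ^ d * ωd) ≤ I := by
    have step1 : ∀ j ∈ S, K ‖x i - x j‖ * (ρ ^ d * ωd)
        ≤ ∫ z in Metric.ball (n j) ρ, f z := by
      intro j hj
      have hc1 : ∫ _ in Metric.ball (n j) ρ, K ‖x i - x j‖ ∂volume
          = K ‖x i - x j‖ * (ρ ^ d * ωd) := by
        rw [setIntegral_const, measureReal_def, hvol (n j), smul_eq_mul, mul_comm]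
      rw [← hc1]
      exact setIntegral_mono_on
        (integrableOn_const measure_ball_lt_top.ne) (hfij j hj)
        measurableSet_ball (hpt j hj)
    have step2 : ∑ j ∈ S, ∫ z in Metric.ball (n j) ρ, f z
        = ∫ z in ⋃ j ∈ S, Metric.ball (n j) ρ, f z := by
      exact (integral_biUnion_finset S (fun j _ => measurableSet_ball) hdisj hfij).symm
    have step3 : ∫ z in ⋃ j ∈ S, Metric.ball (n j) ρ, f z ≤ I := by
      apply setIntegral_mono_set hfi
      · filter_upwards with z using hK0 _
      · apply HasSubset.Subset.eventuallyLE
        exact Set.iUnion₂_subset hsub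
    calc ∑ j ∈ S, K ‖x i - x j‖ * (ρ ^ d * ωd)
        ≤ ∑ j ∈ S, ∫ z in Metric.ball (n j) ρ, f z := Finset.sum_le_sum step1
      _ = ∫ z in ⋃ j ∈ S, Metric.ball (n j) ρ, f z := step2
      _ ≤ I := step3
  -- conclude by arithmetic
  have hV : ρ ^ d * ωd = c ^ d * ωd / (4 ^ d * N) := by
    rw [hρ, div_pow, hδd]
    field_simp
  have hsum : (∑ j ∈ S, K ‖x i - x j‖) * (ρ ^ d * ωd) ≤ I := by
    rw [Finset.sum_mul]; exact key
  have hVpos : 0 < ρ ^ d * ωd := by positivity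
  have h1 : ∑ j ∈ S, K ‖x i - x j‖ ≤ I / (ρ ^ d * ωd) := (le_div_iff₀ hVpos).mpr hsum
  have h2 : I / (ρ ^ d * ωd) = (4 ^ d * N) / (c ^ d * ωd) * I := by
    rw [hV]
    field_simp
  have h3 : (4 ^ d * N) / (c ^ d * ωd) * I ≤ (8 ^ d * N) / (c ^ d * ωd) * I := by
    apply mul_le_mul_of_nonneg_right _ hI0
    gcongr
    norm_num
  calc ∑ j ∈ S, K ‖x i - x j‖ ≤ I / (ρ ^ d * ωd) := h1
    _ = (4 ^ d * N) / (c ^ d * ωd) * I := h2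
    _ ≤ (8 ^ d * N) / (c ^ d * ωd) * I := h3
end

section
/- Let K : [0,∞) → [0,∞) be nonincreasing with r ↦ r^{d-1}K(r) locally integrable. There exists a constant C_K depending only on c, d, K such that for all N and all x ∈ (ℝ^d)^N with |x^i - x^j| ≥ c N^{-1/d} for i ≠ j, the discrete interaction energy satisfies (1/N²) Σ_{i≠j} K(|x^i - x^j|) ≤ C_K. -/
open MeasureTheory
open scoped ENNReal


open Metric in
lemma packing_count (d : ℕ) (hd : 1 ≤ d) {N : ℕ} (x : Fin N → EuclideanSpace ℝ (Fin d))
    {δ : ℝ} (hδ : 0 < δ) (hsep : ∀ i j : Fin N, i ≠ j → δ ≤ ‖x i - x j‖)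
    (i : Fin N) (t : ℝ) (ht : 0 ≤ t) :
    ((Finset.univ.filter fun j : Fin N => j ≠ i ∧ ‖x i - x j‖ ≤ t).card : ℝ)
      ≤ ((2*t + δ)/δ)^d := by
  haveI : Nonempty (Fin d) := ⟨⟨0, hd⟩⟩
  set S := Finset.univ.filter fun j : Fin N => j ≠ i ∧ ‖x i - x j‖ ≤ t with hS
  have hdisj : (S : Set (Fin N)).PairwiseDisjoint (fun j => ball (x j) (δ/2)) := by
    intro a _ b _ hab
    apply ball_disjoint_ball
    rw [dist_eq_norm]
    linarith [hsep a b hab]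
  have hsub : (⋃ j ∈ S, ball (x j) (δ/2)) ⊆ ball (x i) (t + δ/2) := by
    intro y hy
    simp only [Set.mem_iUnion] at hy
    obtain ⟨j, hjS, hyj⟩ := hy
    have hj : j ≠ i ∧ ‖x i - x j‖ ≤ t := by
      simpa [hS] using hjS
    rw [mem_ball] at hyj ⊢
    calc dist y (x i) ≤ dist y (x j) + dist (x j) (x i) := dist_triangle _ _ _
      _ < δ/2 + t := by
          have : dist (x j) (x i) ≤ t := by rw [dist_eq_norm, ← norm_neg]; simpa using hj.2
          linarith
      _ = t + δ/2 := by ring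
  have hmeas : volume (⋃ j ∈ S, ball (x j) (δ/2)) = ∑ j ∈ S, volume (ball (x j) (δ/2)) :=
    measure_biUnion_finset hdisj (fun _ _ => measurableSet_ball)
  have hle : ∑ j ∈ S, volume (ball (x j) (δ/2)) ≤ volume (ball (x i) (t + δ/2)) := by
    rw [← hmeas]; exact measure_mono hsub
  have hball : ∀ z : EuclideanSpace ℝ (Fin d), ∀ r : ℝ, 0 ≤ r →
      volume (ball z r) = ENNReal.ofReal (r ^ d) * volume (ball (0 : EuclideanSpace ℝ (Fin d)) 1) := by
    intro z r hr
    rw [Measure.addHaar_ball volume z hr, finrank_euclideanSpace_fin]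
  rw [Finset.sum_congr rfl (fun j _ => hball (x j) (δ/2) (by linarith)),
    Finset.sum_const, hball (x i) (t + δ/2) (by linarith), nsmul_eq_mul] at hle
  set v := volume (ball (0 : EuclideanSpace ℝ (Fin d)) 1) with hv
  have hv0 : v ≠ 0 := (measure_ball_pos volume 0 one_pos).ne'
  have hvtop : v ≠ ⊤ := measure_ball_lt_top.ne
  have hle2 : (S.card : ℝ≥0∞) * ENNReal.ofReal ((δ/2) ^ d) ≤ ENNReal.ofReal ((t + δ/2) ^ d) := by
    rw [← ENNReal.mul_le_mul_iff_left hv0 hvtop, mul_assoc]; exact hle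
  have hle3 : (S.card : ℝ) * (δ/2) ^ d ≤ (t + δ/2) ^ d := by
    have := ENNReal.toReal_mono (by finiteness) hle2
    rw [ENNReal.toReal_mul, ENNReal.toReal_ofReal (by positivity),
      ENNReal.toReal_ofReal (by positivity)] at this
    simpa using this
  have hpow : ((2*t + δ)/δ)^d = (t + δ/2)^d / (δ/2)^d := by
    rw [div_pow, div_pow]
    rw [div_eq_div_iff (by positivity) (by positivity), ← div_pow, ← mul_pow, ← mul_pow]
    congr 1
    ring
  rw [hpow, le_div_iff₀ (by positivity)]
  exact hle3

lemma K_pointwise (d : ℕ) (hd : 1 ≤ d) (K : ℝ → ℝ) (hK0 : ∀ r, 0 ≤ K r)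
    (hKmono : ∀ r s : ℝ, 0 ≤ r → r ≤ s → K s ≤ K r)
    (hKloc : ∀ R : ℝ, 0 < R → IntegrableOn (fun r : ℝ => r ^ (d - 1) * K r) (Set.Ioc 0 R))
    {r : ℝ} (hr : 0 < r) :
    K r * r ^ d ≤ 2 * d * ∫ s in Set.Ioc (r/2) r, s ^ (d-1) * K s := by
  have hD : (0:ℝ) < d := by exact_mod_cast hd
  have hint : IntegrableOn (fun s => s^(d-1)*K s) (Set.Ioc (r/2) r) :=
    (hKloc r hr).mono_set (Set.Ioc_subset_Ioc (by linarith) le_rfl)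
  have hcont : IntegrableOn (fun s : ℝ => s^(d-1)*K r) (Set.Ioc (r/2) r) := by
    apply (continuous_pow (d-1)).mul continuous_const |>.integrableOn_Ioc
  have hlow : ∫ s in Set.Ioc (r/2) r, s^(d-1) * K r ≤ ∫ s in Set.Ioc (r/2) r, s^(d-1)*K s := by
    apply setIntegral_mono_on hcont hint measurableSet_Ioc
    intro s hs
    have hs0 : 0 < s := lt_trans (by linarith) hs.1
    exact mul_le_mul_of_nonneg_left (hKmono s r hs0.le hs.2) (by positivity)
  have hval : ∫ s in Set.Ioc (r/2) r, s^(d-1) * K r = (r^d - (r/2)^d)/d * K r := by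
    rw [MeasureTheory.integral_mul_const]
    congr 1
    rw [← intervalIntegral.integral_of_le (by linarith : r/2 ≤ r), integral_pow]
    have h1 : d - 1 + 1 = d := Nat.succ_pred_eq_of_pos hd
    rw [h1]
    congr 1
    rw [← h1]
    push_cast
    ring
  have h2 : (r/2)^d ≤ r^d / 2 := by
    rw [div_pow]
    apply div_le_div_of_nonneg_left (by positivity) two_pos
    calc (2:ℝ) = 2^1 := (pow_one 2).symm
      _ ≤ 2^d := pow_le_pow_right₀ one_le_two hd
  have hstep : K r * r ^ d ≤ 2 * d * ((r^d - (r/2)^d)/d * K r) := by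
    have heq : 2 * (d:ℝ) * ((r^d - (r/2)^d)/d * K r) = 2*(r^d - (r/2)^d)*K r := by
      field_simp
    rw [heq]
    nlinarith [hK0 r, pow_nonneg hr.le d]
  calc K r * r ^ d ≤ 2 * d * ((r^d - (r/2)^d)/d * K r) := hstep
    _ ≤ 2 * d * ∫ s in Set.Ioc (r/2) r, s ^ (d-1) * K s := by
        apply mul_le_mul_of_nonneg_left _ (by positivity)
        rw [← hval]; exact hlow

lemma innerSumBound (d : ℕ) (hd : 1 ≤ d) (K : ℝ → ℝ) (hK0 : ∀ r, 0 ≤ K r)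
    (hKmono : ∀ r s : ℝ, 0 ≤ r → r ≤ s → K s ≤ K r)
    (hKloc : ∀ R : ℝ, 0 < R → IntegrableOn (fun r : ℝ => r ^ (d - 1) * K r) (Set.Ioc 0 R))
    {N : ℕ} (x : Fin N → EuclideanSpace ℝ (Fin d)) {δ : ℝ} (hδ : 0 < δ)
    (hsep : ∀ i j : Fin N, i ≠ j → δ ≤ ‖x i - x j‖) (i : Fin N) :
    ∑ j ∈ Finset.univ.filter (fun j : Fin N => j ≠ i), K ‖x i - x j‖
      ≤ N * K 1 + 2*d*(6/δ)^d * ∫ s in Set.Ioc (0:ℝ) 1, s^(d-1)*K s := by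
  classical
  set r : Fin N → ℝ := fun j => ‖x i - x j‖ with hr
  set I1 := ∫ s in Set.Ioc (0:ℝ) 1, s^(d-1)*K s with hI1
  have hI1nn : 0 ≤ I1 := by
    apply setIntegral_nonneg measurableSet_Ioc
    intro s hs
    exact mul_nonneg (pow_nonneg hs.1.le _) (hK0 s)
  set A := (Finset.univ.filter (fun j : Fin N => j ≠ i)).filter (fun j => r j ≤ 1) with hA
  set Af := (Finset.univ.filter (fun j : Fin N => j ≠ i)).filter (fun j => ¬ r j ≤ 1) with hAf
  have hsplit : ∑ j ∈ Finset.univ.filter (fun j : Fin N => j ≠ i), K (r j)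
      = ∑ j ∈ A, K (r j) + ∑ j ∈ Af, K (r j) :=
    (Finset.sum_filter_add_sum_filter_not _ _ _).symm
  -- properties of A members
  have hAmem : ∀ j ∈ A, j ≠ i ∧ δ ≤ r j ∧ r j ≤ 1 := by
    intro j hj
    rw [hA, Finset.mem_filter, Finset.mem_filter] at hj
    exact ⟨hj.1.2, hsep i j (Ne.symm hj.1.2), hj.2⟩
  -- far bound
  have hfar : ∑ j ∈ Af, K (r j) ≤ N * K 1 := by
    have h1 : ∀ j ∈ Af, K (r j) ≤ K 1 := by
      intro j hj
      rw [hAf, Finset.mem_filter] at hj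
      exact hKmono 1 (r j) zero_le_one (le_of_lt (not_le.1 hj.2))
    calc ∑ j ∈ Af, K (r j) ≤ Af.card • K 1 := Finset.sum_le_card_nsmul _ _ _ h1
      _ = (Af.card : ℝ) * K 1 := nsmul_eq_mul _ _
      _ ≤ N * K 1 := by
          apply mul_le_mul_of_nonneg_right _ (hK0 1)
          have h3 : (Af.card : ℝ) ≤ ((Finset.univ : Finset (Fin N)).card : ℝ) :=
            Nat.cast_le.2 (Finset.card_le_univ Af)
          simpa using h3
  -- near bound
  set g : ℝ → ℝ := fun s => s^(d-1)*K s with hg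
  set fj : Fin N → ℝ → ℝ := fun j s => ((r j)^d)⁻¹ * Set.indicator (Set.Ioc (r j/2) (r j)) g s
    with hfj
  have hTsub : ∀ j ∈ A, Set.Ioc (r j/2) (r j) ⊆ Set.Ioc (0:ℝ) 1 := by
    intro j hj
    obtain ⟨-, h1, h2⟩ := hAmem j hj
    exact Set.Ioc_subset_Ioc (by linarith) h2
  have hintfj : ∀ j ∈ A, Integrable (fj j) (volume.restrict (Set.Ioc (0:ℝ) 1)) := by
    intro j hj
    have h1 : IntegrableOn g (Set.Ioc (r j/2) (r j)) := (hKloc 1 one_pos).mono_set (hTsub j hj)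
    have h2 : Integrable ((Set.Ioc (r j/2) (r j)).indicator g) volume :=
      h1.integrable_indicator measurableSet_Ioc
    exact (h2.restrict).const_mul _
  have hstep1 : ∀ j ∈ A, K (r j) ≤ 2*d* ∫ s in Set.Ioc (0:ℝ) 1, fj j s := by
    intro j hj
    obtain ⟨hji, h1, h2⟩ := hAmem j hj
    have hr0 : 0 < r j := lt_of_lt_of_le hδ h1
    have hKp := K_pointwise d hd K hK0 hKmono hKloc hr0
    have hval : ∫ s in Set.Ioc (0:ℝ) 1, fj j s
        = ((r j)^d)⁻¹ * ∫ s in Set.Ioc (r j/2) (r j), g s := by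
      rw [hfj]
      simp only
      rw [MeasureTheory.integral_const_mul]
      congr 1
      rw [setIntegral_indicator measurableSet_Ioc,
        Set.inter_eq_self_of_subset_right (hTsub j hj)]
    rw [hval]
    have hP : (0:ℝ) < (r j)^d := pow_pos hr0 d
    have h3 := mul_le_mul_of_nonneg_right hKp (inv_nonneg.2 hP.le)
    rw [mul_assoc, mul_inv_cancel₀ hP.ne', mul_one] at h3
    exact h3.trans_eq (by ring)
  have hsum1 : ∑ j ∈ A, K (r j) ≤ 2*d* ∫ s in Set.Ioc (0:ℝ) 1, (∑ j ∈ A, fj j s) := by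
    rw [integral_finset_sum A hintfj, Finset.mul_sum]
    exact Finset.sum_le_sum hstep1
  have hpt : ∀ s ∈ Set.Ioc (0:ℝ) 1, (∑ j ∈ A, fj j s) ≤ (6/δ)^d * g s := by
    intro s hs
    have hs0 : 0 < s := hs.1
    have hgs : 0 ≤ g s := by
      rw [hg]; have := hK0 s; positivity
    set B := A.filter (fun j => s ∈ Set.Ioc (r j/2) (r j)) with hB
    have hsum : ∑ j ∈ A, fj j s = ∑ j ∈ B, ((r j)^d)⁻¹ * g s := by
      rw [hB, Finset.sum_filter (fun j => s ∈ Set.Ioc (r j/2) (r j))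
        (fun j => ((r j)^d)⁻¹ * g s)]
      apply Finset.sum_congr rfl
      intro j hj
      by_cases h : s ∈ Set.Ioc (r j/2) (r j)
      · simp [hfj, Set.indicator_of_mem h, h]
      · simp [hfj, Set.indicator_of_notMem h, h]
    rw [hsum]
    rcases Finset.eq_empty_or_nonempty B with hBe | ⟨j0, hj0⟩
    · rw [hBe, Finset.sum_empty]
      positivity
    · have hj0B := hj0
      rw [hB, Finset.mem_filter] at hj0B
      have hδ2s : δ ≤ 2*s := by
        have h1 := (hAmem j0 hj0B.1).2.1
        have h2 : r j0 / 2 < s := hj0B.2.1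
        linarith
      have hterm : ∀ j ∈ B, ((r j)^d)⁻¹ * g s ≤ (s^d)⁻¹ * g s := by
        intro j hjB
        rw [hB, Finset.mem_filter] at hjB
        have hsr : s ≤ r j := hjB.2.2
        have : s^d ≤ (r j)^d := pow_le_pow_left₀ hs0.le hsr d
        exact mul_le_mul_of_nonneg_right
          (inv_anti₀ (pow_pos hs0 d) this) hgs
      have hcardB : (B.card : ℝ) ≤ (6*s/δ)^d := by
        have hsub : B ⊆ Finset.univ.filter (fun j : Fin N => j ≠ i ∧ r j ≤ 2*s) := by
          intro j hjB
          rw [hB, Finset.mem_filter] at hjB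
          rw [Finset.mem_filter]
          refine ⟨Finset.mem_univ _, (hAmem j hjB.1).1, ?_⟩
          have : r j / 2 < s := hjB.2.1
          linarith
        have h1 : (B.card : ℝ) ≤ ((Finset.univ.filter
            (fun j : Fin N => j ≠ i ∧ r j ≤ 2*s)).card : ℝ) := by
          exact_mod_cast Finset.card_le_card hsub
        have h2 := packing_count d hd x hδ hsep i (2*s) (by linarith)
        refine h1.trans (h2.trans ?_)
        apply pow_le_pow_left₀ (by positivity)
        rw [div_le_div_iff₀ hδ hδ]
        nlinarith
      calc ∑ j ∈ B, ((r j)^d)⁻¹ * g s ≤ ∑ j ∈ B, (s^d)⁻¹ * g s := Finset.sum_le_sum hterm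
        _ = (B.card : ℝ) * ((s^d)⁻¹ * g s) := by rw [Finset.sum_const, nsmul_eq_mul]
        _ ≤ (6*s/δ)^d * ((s^d)⁻¹ * g s) := by
            apply mul_le_mul_of_nonneg_right hcardB (by positivity)
        _ = (6/δ)^d * g s := by
            have hsd : (s:ℝ)^d ≠ 0 := (pow_pos hs0 d).ne'
            field_simp
            ring
  have hint2 : IntegrableOn (fun s => (6/δ)^d * g s) (Set.Ioc (0:ℝ) 1) :=
    (hKloc 1 one_pos).const_mul _
  have hsum2 : ∫ s in Set.Ioc (0:ℝ) 1, (∑ j ∈ A, fj j s) ≤ (6/δ)^d * I1 := by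
    have h1 : ∫ s in Set.Ioc (0:ℝ) 1, (∑ j ∈ A, fj j s)
        ≤ ∫ s in Set.Ioc (0:ℝ) 1, (6/δ)^d * g s := by
      apply setIntegral_mono_on (integrable_finset_sum A hintfj) hint2 measurableSet_Ioc hpt
    rw [MeasureTheory.integral_const_mul] at h1
    exact h1
  have hnear : ∑ j ∈ A, K (r j) ≤ 2*d*(6/δ)^d * I1 := by
    refine hsum1.trans ?_
    have := mul_le_mul_of_nonneg_left hsum2 (by positivity : (0:ℝ) ≤ 2*d)
    exact this.trans_eq (by ring)
  rw [hsplit]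
  linarith

theorem stmt_9 (d : ℕ) (hd : 1 ≤ d) (c : ℝ) (hc : 0 < c)
    (K : ℝ → ℝ) (hK0 : ∀ r, 0 ≤ K r)
    (hKmono : ∀ r s : ℝ, 0 ≤ r → r ≤ s → K s ≤ K r)
    (hKloc : ∀ R : ℝ, 0 < R → IntegrableOn (fun r : ℝ => r ^ (d - 1) * K r) (Set.Ioc 0 R)) :
    ∃ C : ℝ, ∀ N : ℕ, ∀ x : Fin N → EuclideanSpace ℝ (Fin d),
      (∀ i j : Fin N, i ≠ j → c * (N : ℝ) ^ (-(1 : ℝ) / d) ≤ ‖x i - x j‖) →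
      (1 / (N : ℝ) ^ 2) *
          ∑ i : Fin N, ∑ j ∈ Finset.univ.filter (fun j : Fin N => j ≠ i), K ‖x i - x j‖
        ≤ C := by
  set I1 := ∫ s in Set.Ioc (0:ℝ) 1, s^(d-1)*K s with hI1
  have hI1nn : 0 ≤ I1 := by
    apply setIntegral_nonneg measurableSet_Ioc
    intro s hs
    exact mul_nonneg (pow_nonneg hs.1.le _) (hK0 s)
  have hd0 : (d:ℝ) ≠ 0 := by positivity
  refine ⟨K 1 + 2*d*6^d/c^d * I1, ?_⟩
  intro N x hx
  rcases Nat.eq_zero_or_pos N with hN | hN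
  · subst hN
    simp only [Finset.univ_eq_empty, Finset.sum_empty, Nat.cast_zero]
    rw [mul_zero]
    have : (0:ℝ) ≤ 2*d*6^d/c^d * I1 := by positivity
    linarith [hK0 1]
  · have hN0 : (0:ℝ) < N := by exact_mod_cast hN
    set δ := c * (N : ℝ) ^ (-(1 : ℝ) / d) with hδdef
    have hδ : 0 < δ := mul_pos hc (Real.rpow_pos_of_pos hN0 _)
    have hpow : ((N:ℝ) ^ ((-(1:ℝ))/d))^(d:ℕ) = ((N:ℝ))⁻¹ := by
      rw [← Real.rpow_natCast ((N:ℝ) ^ ((-(1:ℝ))/d)) d, ← Real.rpow_mul hN0.le]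
      rw [div_mul_cancel₀ _ hd0, Real.rpow_neg_one]
    have hδd : δ^d = c^d * (N:ℝ)⁻¹ := by rw [hδdef, mul_pow, hpow]
    have h6 : (6/δ)^d = 6^d * N / c^d := by
      rw [div_pow, hδd]
      field_simp
    have hbound : ∑ i : Fin N, ∑ j ∈ Finset.univ.filter (fun j : Fin N => j ≠ i), K ‖x i - x j‖
        ≤ N * (N * K 1 + 2*d*(6/δ)^d * I1) := by
      calc ∑ i : Fin N, ∑ j ∈ Finset.univ.filter (fun j : Fin N => j ≠ i), K ‖x i - x j‖
          ≤ ∑ _i : Fin N, (N * K 1 + 2*d*(6/δ)^d * I1) := by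
            apply Finset.sum_le_sum
            intro i _
            exact innerSumBound d hd K hK0 hKmono hKloc x hδ hx i
        _ = N * (N * K 1 + 2*d*(6/δ)^d * I1) := by
            rw [Finset.sum_const, nsmul_eq_mul]
            simp
    have h2 : (1 / (N:ℝ)^2) * (N * (N * K 1 + 2*d*(6/δ)^d * I1))
        = K 1 + 2*d*6^d/c^d * I1 := by
      rw [h6]
      field_simp
    calc (1 / (N : ℝ) ^ 2) *
          ∑ i : Fin N, ∑ j ∈ Finset.univ.filter (fun j : Fin N => j ≠ i), K ‖x i - x j‖
        ≤ (1 / (N:ℝ)^2) * (N * (N * K 1 + 2*d*(6/δ)^d * I1)) := by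
          apply mul_le_mul_of_nonneg_left hbound (by positivity)
      _ = K 1 + 2*d*6^d/c^d * I1 := h2
end

section
/- Fix integers 1 ≤ i ≤ N ≤ N and R_0 > 0. Define the truncation x̄^i := max(min(x^i, R_0 + i/N), -R_0 - (N+1-i)/N). If x^{i+1} ≥ x^i + 1/N for all i, then x̄^{i+1} ≥ x̄^i + 1/N for all i, and moreover x̄^{i+1} - x̄^i ≤ x^{i+1} - x^i. -/
theorem stmt_11 (N : ℕ) (hN : 1 ≤ N) (R0 : ℝ) (hR0 : 0 < R0)
    (x : ℕ → ℝ)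
    (hord : ∀ i ∈ Finset.Icc 1 (N - 1), x i + 1 / N ≤ x (i + 1))
    (xb : ℕ → ℝ)
    (hxb : ∀ i, xb i = max (min (x i) (R0 + (i : ℝ) / N)) (-R0 - ((N : ℝ) + 1 - i) / N)) :
    ∀ i ∈ Finset.Icc 1 (N - 1),
      xb i + 1 / N ≤ xb (i + 1) ∧ xb (i + 1) - xb i ≤ x (i + 1) - x i := by
  intro i hi
  have h := hord i hi
  have hN1 : (1:ℝ) ≤ N := by exact_mod_cast hN
  have hNpos : (0:ℝ) < N := by linarith
  have e1 : R0 + ((i + 1 : ℕ) : ℝ) / N = (R0 + (i : ℝ) / N) + 1 / N := by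
    push_cast; ring
  have e2 : -R0 - ((N : ℝ) + 1 - ((i + 1 : ℕ) : ℝ)) / N
      = (-R0 - ((N : ℝ) + 1 - (i : ℝ)) / N) + 1 / N := by
    push_cast; ring
  have key : ((N : ℝ) + 1 - i) / N + (i : ℝ) / N = 1 + 1 / N := by
    field_simp
    ring
  have hab : (-R0 - ((N : ℝ) + 1 - (i : ℝ)) / N) + 1 / N ≤ R0 + (i : ℝ) / N := by
    nlinarith
  have h1N : 0 < 1 / (N:ℝ) := by positivity
  rw [hxb, hxb, e1, e2]
  set a := R0 + (i : ℝ) / N with ha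
  set b := -R0 - ((N : ℝ) + 1 - (i : ℝ)) / N with hb
  clear_value a b
  constructor <;>
  · simp only [min_def, max_def]
    split_ifs <;> linarith
end

section
/- In the setting of the quantile construction above, for any bounded L-Lipschitz function φ : ℝ → ℝ, one has |∫_{(-R,R)} φ d(M_R m^N_x - m dx)| ≤ (2 M_R / N)(‖φ‖_∞ + R L). -/
open MeasureTheory

theorem stmt_14 (m : ℝ → ℝ) (hm0 : ∀ y, 0 ≤ m y) (hmint : Integrable m)
    (hmprob : ∫ y, m y = 1) (hmpos : ∀ᵐ y ∂volume, 0 < m y)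
    (R : ℝ) (hR : 0 < R) (MR : ℝ) (hMR : MR = ∫ t in (-R)..R, m t)
    (N : ℕ) (hN : 1 ≤ N) (x : ℕ → ℝ)
    (hquant : ∀ i ∈ Finset.Icc 1 N,
      ∫ t in (-R)..(x i), m t = MR / (2 * N) + ((i : ℝ) - 1) * MR / N)
    (φ : ℝ → ℝ) (L C : ℝ) (hL : 0 ≤ L)
    (hLip : ∀ a b : ℝ, |φ a - φ b| ≤ L * |a - b|)
    (hC : ∀ a : ℝ, |φ a| ≤ C) :
    |MR * ((1 / (N : ℝ)) * ∑ i ∈ Finset.Icc 1 N, φ (x i))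
        - ∫ y in Set.Ioo (-R) R, φ y * m y|
      ≤ (2 * MR / N) * (C + R * L) := by
  have hNR : (0:ℝ) < N := by exact_mod_cast hN
  have hC0 : 0 ≤ C := le_trans (abs_nonneg _) (hC 0)
  -- φ continuous
  have hφc : Continuous φ := by
    have : LipschitzWith (Real.toNNReal L) φ := by
      apply LipschitzWith.of_dist_le_mul
      intro a b
      rw [Real.dist_eq, Real.dist_eq, Real.coe_toNNReal L hL]
      exact hLip a b
    exact this.continuous
  have hφm : Integrable (fun y => φ y * m y) :=
    hmint.bdd_mul (c := C) hφc.aestronglyMeasurable (Filter.Eventually.of_forall fun y => by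
      rw [Real.norm_eq_abs]; exact hC y)
  -- the primitive F
  set F : ℝ → ℝ := fun t => ∫ s in (-R)..t, m s with hF
  have hFcont : Continuous F := hmint.continuous_primitive (-R)
  have hFdiff : ∀ s t : ℝ, F t - F s = ∫ u in s..t, m u := by
    intro s t
    have h := intervalIntegral.integral_add_adjacent_intervals
      (hmint.intervalIntegrable (a := -R) (b := s))
      (hmint.intervalIntegrable (a := s) (b := t))
    simp only [hF]
    linarith
  have hFmono : Monotone F := by
    intro s t hst
    have h1 : 0 ≤ ∫ u in s..t, m u :=
      intervalIntegral.integral_nonneg hst (fun u _ => hm0 u)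
    have h2 := hFdiff s t
    linarith
  have hFR0 : F (-R) = 0 := by simp [hF]
  have hFRR : F R = MR := hMR.symm
  -- MR > 0
  have hMRpos : 0 < MR := by
    rw [hMR, intervalIntegral.integral_of_le (by linarith : (-R) ≤ R)]
    rw [setIntegral_pos_iff_support_of_nonneg_ae
      (ae_restrict_of_ae (hmpos.mono fun y hy => hy.le))
      (hmint.integrableOn)]
    have hae : (Function.support m ∩ Set.Ioc (-R) R : Set ℝ) =ᵐ[volume] Set.Ioc (-R) R := by
      rw [Filter.eventuallyEq_set]
      filter_upwards [hmpos] with y hy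
      simp [Function.mem_support, ne_of_gt hy]
    rw [measure_congr hae, Real.volume_Ioc]
    simp only [ENNReal.ofReal_pos]
    linarith
  -- partition points
  have hex : ∀ i : ℕ, i ≤ N → ∃ t ∈ Set.Icc (-R) R, F t = (i:ℝ) * MR / N := by
    intro i hi
    have hiR : (i:ℝ) ≤ N := by exact_mod_cast hi
    have hmem : (i:ℝ) * MR / N ∈ Set.Icc (F (-R)) (F R) := by
      rw [hFR0, hFRR]
      constructor
      · positivity
      · rw [div_le_iff₀ hNR]
        nlinarith [Nat.cast_nonneg (α := ℝ) i]
    obtain ⟨t, ht, hFt⟩ := intermediate_value_Icc (by linarith : (-R) ≤ R)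
      hFcont.continuousOn hmem
    exact ⟨t, ht, hFt⟩
  classical
  set a : ℕ → ℝ := fun i =>
    if i = 0 then -R else if i = N then R else
      if h : i ≤ N then (hex i h).choose else R with ha
  have ha0 : a 0 = -R := by simp [ha]
  have haN : a N = R := by
    have : N ≠ 0 := by omega
    simp [ha, this]
  have haF : ∀ i, i ≤ N → F (a i) = (i:ℝ) * MR / N := by
    intro i hi
    by_cases h0 : i = 0
    · simp [ha, h0, hFR0]
    by_cases hNi : i = N
    · subst hNi
      rw [haN, hFRR]
      field_simp
    · simp only [ha, h0, if_false, hNi, dif_pos hi]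
      exact (hex i hi).choose_spec.2
  -- per-interval facts
  have hkey : ∀ k, k < N →
      a k ≤ a (k+1) ∧ x (k+1) ∈ Set.Icc (a k) (a (k+1)) ∧
      (∫ u in a k..a (k+1), m u) = MR / N := by
    intro k hk
    have hk1 : k + 1 ≤ N := hk
    have hFak : F (a k) = (k:ℝ) * MR / N := haF k (le_of_lt hk)
    have hFak1 : F (a (k+1)) = ((k:ℝ)+1) * MR / N := by
      rw [haF (k+1) hk1]; push_cast; ring
    have hFx : F (x (k+1)) = MR / (2*N) + (k:ℝ) * MR / N := by
      have h := hquant (k+1) (Finset.mem_Icc.mpr ⟨by omega, hk1⟩)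
      show (∫ t in (-R)..(x (k+1)), m t) = _
      rw [h]; push_cast; ring
    have hhalf : MR / (2*N) = (MR / N) / 2 := by
      rw [div_div]; ring_nf
    have hdpos : 0 < MR / N := by positivity
    have hlt1 : F (a k) < F (x (k+1)) := by
      rw [hFak, hFx, hhalf]
      linarith
    have hlt2 : F (x (k+1)) < F (a (k+1)) := by
      rw [hFak1, hFx, hhalf]
      have : ((k:ℝ)+1) * MR / N = (k:ℝ) * MR / N + MR / N := by ring
      rw [this]
      have : (k:ℝ) * MR / N = (k:ℝ) * (MR / N) := by ring
      linarith [this]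
    have h1 : a k ≤ x (k+1) := by
      by_contra h
      push_neg at h
      exact absurd (hFmono h.le) (not_le.mpr hlt1)
    have h2 : x (k+1) ≤ a (k+1) := by
      by_contra h
      push_neg at h
      exact absurd (hFmono h.le) (not_le.mpr hlt2)
    refine ⟨le_trans h1 h2, ⟨h1, h2⟩, ?_⟩
    have := hFdiff (a k) (a (k+1))
    rw [hFak, hFak1] at this
    rw [← this]; ring
  -- per-interval estimate
  have hest : ∀ k, k < N →
      |MR / N * φ (x (k+1)) - ∫ u in a k..a (k+1), φ u * m u|
        ≤ L * (MR / N) * (a (k+1) - a k) := by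
    intro k hk
    obtain ⟨hab, ⟨hx1, hx2⟩, hmint'⟩ := hkey k hk
    have e1 : MR / N * φ (x (k+1)) = ∫ u in a k..a (k+1), φ (x (k+1)) * m u := by
      rw [intervalIntegral.integral_const_mul, hmint']; ring
    have hint1 : Integrable (fun u => φ (x (k+1)) * m u) := hmint.const_mul _
    have hg : Integrable (fun u => φ (x (k+1)) * m u - φ u * m u) := hint1.sub hφm
    rw [e1, ← intervalIntegral.integral_sub hint1.intervalIntegrable hφm.intervalIntegrable]
    calc |∫ u in a k..a (k+1), (φ (x (k+1)) * m u - φ u * m u)|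
        ≤ ∫ u in a k..a (k+1), |φ (x (k+1)) * m u - φ u * m u| :=
          intervalIntegral.abs_integral_le_integral_abs hab
      _ ≤ ∫ u in a k..a (k+1), L * (a (k+1) - a k) * m u := by
          apply intervalIntegral.integral_mono_on hab
            hg.abs.intervalIntegrable ((hmint.const_mul _).intervalIntegrable)
          intro u hu
          have : φ (x (k+1)) * m u - φ u * m u = (φ (x (k+1)) - φ u) * m u := by ring
          rw [this, abs_mul, abs_of_nonneg (hm0 u)]
          apply mul_le_mul_of_nonneg_right _ (hm0 u)
          calc |φ (x (k+1)) - φ u| ≤ L * |x (k+1) - u| := hLip _ _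
            _ ≤ L * (a (k+1) - a k) := by
                apply mul_le_mul_of_nonneg_left _ hL
                rw [abs_le]
                constructor
                · have := hu.2; linarith [hx1]
                · have := hu.1; linarith [hx2]
      _ = L * (MR / N) * (a (k+1) - a k) := by
          rw [intervalIntegral.integral_const_mul, hmint']; ring
  -- rewrite the Ioo integral as a sum over intervals
  have hIoo : ∫ y in Set.Ioo (-R) R, φ y * m y
      = ∑ k ∈ Finset.range N, ∫ u in a k..a (k+1), φ u * m u := by
    rw [intervalIntegral.sum_integral_adjacent_intervals
      (fun k _ => hφm.intervalIntegrable), ha0, haN,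
      intervalIntegral.integral_of_le (by linarith : (-R) ≤ R),
      ← integral_Ioc_eq_integral_Ioo]
  -- rewrite the sum
  have hsum : MR * ((1 / (N : ℝ)) * ∑ i ∈ Finset.Icc 1 N, φ (x i))
      = ∑ k ∈ Finset.range N, MR / N * φ (x (k+1)) := by
    rw [← Finset.Ico_add_one_right_eq_Icc, Finset.sum_Ico_eq_sum_range]

    rw [Finset.mul_sum, Finset.mul_sum]
    apply Finset.sum_congr rfl
    intro k _
    rw [Nat.add_comm 1 k]
    ring
  rw [hsum, hIoo, ← Finset.sum_sub_distrib]
  calc |∑ k ∈ Finset.range N, (MR / N * φ (x (k+1)) - ∫ u in a k..a (k+1), φ u * m u)|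
      ≤ ∑ k ∈ Finset.range N, |MR / N * φ (x (k+1)) - ∫ u in a k..a (k+1), φ u * m u| :=
        Finset.abs_sum_le_sum_abs _ _
    _ ≤ ∑ k ∈ Finset.range N, L * (MR / N) * (a (k+1) - a k) :=
        Finset.sum_le_sum (fun k hk => hest k (Finset.mem_range.mp hk))
    _ = L * (MR / N) * (a N - a 0) := by
        rw [← Finset.mul_sum, Finset.sum_range_sub]
    _ = L * (MR / N) * (2 * R) := by rw [ha0, haN]; ring
    _ ≤ (2 * MR / N) * (C + R * L) := by
        have h1 : 0 ≤ 2 * MR / N * C := by positivity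
        have : L * (MR / N) * (2 * R) = (2 * MR / N) * (R * L) := by ring
        rw [this]
        nlinarith
end

section
/- Let x^i, y^i ∈ ℝ for i,j with |x^i - x^j| ≥ δ for all i ≠ j, and set x̂^j := x^j - (δ/8)(x^j - x^i)/|x^j - x^i| for j ≠ i. Then: (a) for all y ∈ B_{δ/8}(x̂^j), |y - x^i| ≤ |x^j - x^i|; (b) the balls B_{δ/8}(x̂^j), j ≠ i, are pairwise disjoint; (c) if additionally x^j ∈ B_r(x^i) with r ≥ δ then B_{δ/8}(x̂^j) ⊂ B_r(x^i). -/
theorem stmt_17 (d : ℕ) (hd : 1 ≤ d) (δ : ℝ) (hδ : 0 < δ)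
    {ι : Type*} (x : ι → EuclideanSpace ℝ (Fin d)) (i : ι)
    (hdist : ∀ j k : ι, j ≠ k → δ ≤ ‖x j - x k‖)
    (xh : ι → EuclideanSpace ℝ (Fin d))
    (hxh : ∀ j : ι, j ≠ i →
      xh j = x j - (δ / 8) • (‖x j - x i‖⁻¹ • (x j - x i))) :
    (∀ j : ι, j ≠ i → ∀ y ∈ Metric.ball (xh j) (δ / 8), ‖y - x i‖ ≤ ‖x j - x i‖) ∧
    (∀ j k : ι, j ≠ i → k ≠ i → j ≠ k →
      Disjoint (Metric.ball (xh j) (δ / 8)) (Metric.ball (xh k) (δ / 8))) ∧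
    (∀ j : ι, j ≠ i → ∀ r : ℝ, δ ≤ r → x j ∈ Metric.ball (x i) r →
      Metric.ball (xh j) (δ / 8) ⊆ Metric.ball (x i) r) := by
  -- key norm computations
  have hn : ∀ j : ι, j ≠ i → δ ≤ ‖x j - x i‖ := fun j hj => hdist j i hj
  have hxi : ∀ j : ι, j ≠ i → ‖xh j - x i‖ = ‖x j - x i‖ - δ / 8 := by
    intro j hj
    have hnj := hn j hj
    have hpos : 0 < ‖x j - x i‖ := lt_of_lt_of_le hδ hnj
    have : xh j - x i = (1 - δ / 8 * ‖x j - x i‖⁻¹) • (x j - x i) := by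
      rw [hxh j hj, smul_smul, sub_smul, one_smul]
      abel
    rw [this, norm_smul, Real.norm_eq_abs]
    have hle : δ / 8 * ‖x j - x i‖⁻¹ ≤ 1 := by
      rw [mul_inv_le_iff₀ hpos, one_mul]
      linarith
    rw [abs_of_nonneg (by linarith), sub_mul, one_mul, mul_assoc,
      inv_mul_cancel₀ (ne_of_gt hpos), mul_one]
  have hxj : ∀ j : ι, j ≠ i → ‖xh j - x j‖ = δ / 8 := by
    intro j hj
    have hpos : 0 < ‖x j - x i‖ := lt_of_lt_of_le hδ (hn j hj)
    have : xh j - x j = -((δ / 8 * ‖x j - x i‖⁻¹) • (x j - x i)) := by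
      rw [hxh j hj, smul_smul]; abel
    rw [this, norm_neg, norm_smul, Real.norm_eq_abs,
      abs_of_nonneg (by positivity), mul_assoc,
      inv_mul_cancel₀ (ne_of_gt hpos), mul_one]
  have key : ∀ j : ι, j ≠ i → ∀ y ∈ Metric.ball (xh j) (δ / 8),
      ‖y - x i‖ < ‖x j - x i‖ := by
    intro j hj y hy
    rw [Metric.mem_ball, dist_eq_norm] at hy
    calc ‖y - x i‖ ≤ ‖y - xh j‖ + ‖xh j - x i‖ := norm_sub_le_norm_sub_add_norm_sub _ _ _
      _ < δ / 8 + (‖x j - x i‖ - δ / 8) := by rw [hxi j hj]; linarith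
      _ = ‖x j - x i‖ := by ring
  refine ⟨fun j hj y hy => (key j hj y hy).le, ?_, ?_⟩
  · intro j k hj hk hjk
    apply Metric.ball_disjoint_ball
    rw [dist_eq_norm]
    have : ‖x j - x k‖ ≤ ‖x j - xh j‖ + ‖xh j - xh k‖ + ‖xh k - x k‖ := by
      have h1 := norm_sub_le_norm_sub_add_norm_sub (x j) (xh k) (x k)
      have h2 := norm_sub_le_norm_sub_add_norm_sub (x j) (xh j) (xh k)
      linarith
    have hjd := hdist j k hjk
    have hj1 : ‖x j - xh j‖ = δ / 8 := by rw [norm_sub_rev, hxj j hj]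
    have hk1 := hxj k hk
    linarith
  · intro j hj r hr hxjr y hy
    rw [Metric.mem_ball, dist_eq_norm] at *
    exact (key j hj y hy).trans hxjr
end
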